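/- arXiv:2601.18520 — 15 statements merged into one kernel-verified Lean document; each statement's English description precedes it below -/
import Mathlib

section
/- Let the block lower-triangular preconditioner M̂_LT = [[A, 0, 0], [B, −S₁, 0], [0, C, Ŝ₂]] be invertible (equivalently, A, S₁ and Ŝ₂ are invertible). Then M̂_LT⁻¹ K equals the block upper-triangular matrix [[Iₙ, A⁻¹Bᵀ, 0], [0, Iₘ, −S₁⁻¹Cᵀ], [0, 0, Ŝ₂⁻¹S₂]]. -/
open Matrix

/-- If the block lower-triangular preconditioner
`M̂_LT = [[A, 0, 0], [B, −S₁, 0], [0, C, hatS₂]]` is invertible (equivalently, `A`, `S₁`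
and `hatS₂` are invertible), then `M̂_LT⁻¹ K` equals the block upper-triangular matrix
`[[Iₙ, A⁻¹Bᵀ, 0], [0, Iₘ, −S₁⁻¹Cᵀ], [0, 0, hatS₂⁻¹S₂]]`. -/
theorem stmt_0 (n m p : ℕ)
    (A : Matrix (Fin n) (Fin n) ℝ) (B : Matrix (Fin m) (Fin n) ℝ)
    (C : Matrix (Fin p) (Fin m) ℝ) (D : Matrix (Fin m) (Fin m) ℝ)
    (S₁ : Matrix (Fin m) (Fin m) ℝ) (hS₁def : S₁ = D + B * A⁻¹ * Bᵀ)
    (S₂ : Matrix (Fin p) (Fin p) ℝ) (hS₂def : S₂ = C * S₁⁻¹ * Cᵀ)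
    (hatS₂ : Matrix (Fin p) (Fin p) ℝ)
    (hA : IsUnit A.det) (hS₁ : IsUnit S₁.det) (hhatS₂ : IsUnit hatS₂.det)
    (K MLT : Matrix ((Fin n ⊕ Fin m) ⊕ Fin p) ((Fin n ⊕ Fin m) ⊕ Fin p) ℝ)
    (hK : K = fromBlocks (fromBlocks A Bᵀ B (-D)) (fromRows 0 Cᵀ) (fromCols 0 C) 0)
    (hMLT : MLT = fromBlocks (fromBlocks A 0 B (-S₁)) 0 (fromCols 0 C) hatS₂) :
    MLT⁻¹ * K =
      fromBlocks (fromBlocks 1 (A⁻¹ * Bᵀ) 0 1) (fromRows 0 (-(S₁⁻¹ * Cᵀ)))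
        0 (hatS₂⁻¹ * S₂) := by
  have hdet : IsUnit MLT.det := by
    rw [hMLT, Matrix.det_fromBlocks_zero₁₂, Matrix.det_fromBlocks_zero₁₂,
      Matrix.det_neg, Fintype.card_fin]
    exact ((hA.mul ((isUnit_one.neg.pow m).mul hS₁)).mul hhatS₂)
  have h1 : A * (A⁻¹ * Bᵀ) = Bᵀ := by
    rw [← Matrix.mul_assoc, Matrix.mul_nonsing_inv A hA, Matrix.one_mul]
  have h2 : B * (A⁻¹ * Bᵀ) + -S₁ = -D := by
    rw [hS₁def, ← Matrix.mul_assoc]; abel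
  have h3 : -S₁ * -(S₁⁻¹ * Cᵀ) = Cᵀ := by
    rw [Matrix.neg_mul, Matrix.mul_neg, neg_neg, ← Matrix.mul_assoc,
      Matrix.mul_nonsing_inv S₁ hS₁, Matrix.one_mul]
  have h4 : -(C * (S₁⁻¹ * Cᵀ)) + hatS₂ * (hatS₂⁻¹ * S₂) = 0 := by
    rw [← Matrix.mul_assoc hatS₂, Matrix.mul_nonsing_inv hatS₂ hhatS₂, Matrix.one_mul,
      hS₂def, ← Matrix.mul_assoc]
    abel
  have key : MLT * (fromBlocks (fromBlocks 1 (A⁻¹ * Bᵀ) 0 1) (fromRows 0 (-(S₁⁻¹ * Cᵀ)))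
      0 (hatS₂⁻¹ * S₂)) = K := by
    subst hK hMLT
    rw [Matrix.fromBlocks_multiply, Matrix.fromBlocks_multiply,
      Matrix.fromBlocks_mul_fromRows, Matrix.fromCols_mul_fromBlocks,
      Matrix.fromCols_mul_fromRows]
    simp [h1, h2, h3, h4]
  rw [← key, ← Matrix.mul_assoc, Matrix.nonsing_inv_mul MLT hdet, Matrix.one_mul]
end

section
/- Let A, S₁ and Ŝ₂ be invertible and let M̂_LT = [[A, 0, 0], [B, −S₁, 0], [0, C, Ŝ₂]]. Then the characteristic polynomial of M̂_LT⁻¹ K equals (X − 1)^{n+m} times the characteristic polynomial of Ŝ₂⁻¹S₂; in particular, every eigenvalue of M̂_LT⁻¹ K is either 1 or an eigenvalue μ of Ŝ₂⁻¹S₂, i.e. a generalized eigenvalue of S₂ z = μ Ŝ₂ z. -/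
open Matrix Polynomial

private lemma charpoly_one' (k : ℕ) :
    (1 : Matrix (Fin k) (Fin k) ℝ).charpoly = (X - 1) ^ k := by
  have h : charmatrix (1 : Matrix (Fin k) (Fin k) ℝ) =
      diagonal (fun _ => (X - 1 : ℝ[X])) := by
    ext i j
    by_cases h : i = j
    · subst h; simp
    · simp [h, Matrix.one_apply_ne h, diagonal_apply_ne _ h]
  rw [Matrix.charpoly, h, det_diagonal]
  simp

private lemma eval_charpoly' {k : ℕ} (M : Matrix (Fin k) (Fin k) ℂ) (μ : ℂ) :
    M.charpoly.eval μ = (μ • (1 : Matrix (Fin k) (Fin k) ℂ) - M).det := by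
  rw [Matrix.charpoly, ← Polynomial.coe_evalRingHom, RingHom.map_det,
    RingHom.mapMatrix_apply]
  congr 1
  ext i j
  by_cases h : i = j
  · subst h; simp [Matrix.smul_apply]
  · simp [h, Matrix.one_apply_ne h, Matrix.smul_apply]

/-- With `A`, `S₁`, `Ŝ₂` invertible and
`M̂_LT = [[A, 0, 0], [B, −S₁, 0], [0, C, Ŝ₂]]`, the characteristic polynomial of
`M̂_LT⁻¹ K` equals `(X − 1)^{n+m}` times the characteristic polynomial of `Ŝ₂⁻¹S₂`;
in particular, every eigenvalue of `M̂_LT⁻¹ K` is either `1` or an eigenvalue `μ` of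
`Ŝ₂⁻¹S₂`, i.e. a generalized eigenvalue of `S₂ z = μ Ŝ₂ z`. -/
theorem stmt_1 (n m p : ℕ)
    (A : Matrix (Fin n) (Fin n) ℝ) (B : Matrix (Fin m) (Fin n) ℝ)
    (C : Matrix (Fin p) (Fin m) ℝ) (D : Matrix (Fin m) (Fin m) ℝ)
    (S₁ : Matrix (Fin m) (Fin m) ℝ) (hS₁def : S₁ = D + B * A⁻¹ * Bᵀ)
    (S₂ : Matrix (Fin p) (Fin p) ℝ) (hS₂def : S₂ = C * S₁⁻¹ * Cᵀ)
    (hatS₂ : Matrix (Fin p) (Fin p) ℝ)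
    (hA : IsUnit A.det) (hS₁ : IsUnit S₁.det) (hhatS₂ : IsUnit hatS₂.det)
    (K MLT : Matrix ((Fin n ⊕ Fin m) ⊕ Fin p) ((Fin n ⊕ Fin m) ⊕ Fin p) ℝ)
    (hK : K = fromBlocks (fromBlocks A Bᵀ B (-D)) (fromRows 0 Cᵀ) (fromCols 0 C) 0)
    (hMLT : MLT = fromBlocks (fromBlocks A 0 B (-S₁)) 0 (fromCols 0 C) hatS₂) :
    (MLT⁻¹ * K).charpoly = (X - 1) ^ (n + m) * (hatS₂⁻¹ * S₂).charpoly ∧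
      ∀ μ : ℂ, (((MLT⁻¹ * K).map (Complex.ofReal : ℝ → ℂ)).charpoly).IsRoot μ →
        μ = 1 ∨ ((((hatS₂⁻¹ * S₂).map (Complex.ofReal : ℝ → ℂ)).charpoly).IsRoot μ ∧
          ∃ z : Fin p → ℂ, z ≠ 0 ∧
            (S₂.map (Complex.ofReal : ℝ → ℂ)) *ᵥ z =
              μ • ((hatS₂.map (Complex.ofReal : ℝ → ℂ)) *ᵥ z)) := by
  -- notation
  set W : Matrix (Fin p) (Fin p) ℝ := hatS₂⁻¹ * S₂ with hW
  set T : Matrix ((Fin n ⊕ Fin m) ⊕ Fin p) ((Fin n ⊕ Fin m) ⊕ Fin p) ℝ :=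
    fromBlocks (fromBlocks 1 (A⁻¹ * Bᵀ) 0 1) (fromRows 0 (-(S₁⁻¹ * Cᵀ))) 0 W with hT
  have hAinv : A * A⁻¹ = 1 := Matrix.mul_nonsing_inv A hA
  have hS₁inv : S₁ * S₁⁻¹ = 1 := Matrix.mul_nonsing_inv S₁ hS₁
  have hhatinv : hatS₂ * hatS₂⁻¹ = 1 := Matrix.mul_nonsing_inv hatS₂ hhatS₂
  -- MLT is invertible
  have hMLTdet : IsUnit MLT.det := by
    rw [hMLT, det_fromBlocks_zero₁₂, det_fromBlocks_zero₁₂, det_neg,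
      Fintype.card_fin]
    exact ((hA.mul ((isUnit_one.neg.pow m).mul hS₁)).mul hhatS₂)
  -- key identity : MLT * T = K
  have key : MLT * T = K := by
    rw [hMLT, hT, hK, fromBlocks_multiply]
    refine fromBlocks_inj.mpr ⟨?_, ?_, ?_, ?_⟩
    · rw [Matrix.zero_mul, add_zero, fromBlocks_multiply]
      refine fromBlocks_inj.mpr ⟨?_, ?_, ?_, ?_⟩
      · simp
      · rw [← Matrix.mul_assoc, hAinv]
        simp
      · simp
      · rw [hS₁def, ← Matrix.mul_assoc, Matrix.mul_one]
        abel
    · rw [Matrix.zero_mul, add_zero, fromBlocks_mul_fromRows]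
      simp [← Matrix.mul_assoc, hS₁inv]
    · rw [Matrix.mul_zero, add_zero, fromCols_mul_fromBlocks]
      simp
    · rw [fromCols_mul_fromRows, hW, ← Matrix.mul_assoc, hhatinv,
        Matrix.one_mul, Matrix.zero_mul, Matrix.mul_neg, ← Matrix.mul_assoc,
        ← hS₂def]
      simp
  have hinvK : MLT⁻¹ * K = T := by
    rw [← key, ← Matrix.mul_assoc, Matrix.nonsing_inv_mul MLT hMLTdet, Matrix.one_mul]
  -- first part
  have h1 : (MLT⁻¹ * K).charpoly = (X - 1) ^ (n + m) * W.charpoly := by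
    rw [hinvK, hT, charpoly_fromBlocks_zero₂₁, charpoly_fromBlocks_zero₂₁,
      charpoly_one', charpoly_one', ← pow_add]
  refine ⟨h1, ?_⟩
  -- second part
  intro μ hμ
  have hcoe : (Complex.ofReal : ℝ → ℂ) = ⇑(Complex.ofRealHom) := rfl
  rw [hcoe] at hμ
  rw [Matrix.charpoly_map, h1, Polynomial.map_mul, Polynomial.map_pow,
    Polynomial.map_sub, Polynomial.map_X, Polynomial.map_one] at hμ
  rw [IsRoot, eval_mul] at hμ
  rcases mul_eq_zero.mp hμ with h | h
  · left
    simp only [eval_pow, eval_sub, eval_X, eval_one] at h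
    exact sub_eq_zero.mp (pow_eq_zero_iff'.mp h).1
  · right
    have hroot : (((W).map (Complex.ofReal : ℝ → ℂ)).charpoly).IsRoot μ := by
      rw [hcoe, Matrix.charpoly_map]
      exact h
    refine ⟨hroot, ?_⟩
    -- from the root, get an eigenvector
    have hdet : (μ • (1 : Matrix (Fin p) (Fin p) ℂ) -
        W.map (Complex.ofReal : ℝ → ℂ)).det = 0 := by
      rw [← eval_charpoly']
      exact hroot
    obtain ⟨v, hv, hveq⟩ := (Matrix.exists_mulVec_eq_zero_iff).mpr hdet
    refine ⟨v, hv, ?_⟩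
    have hWv : (W.map (Complex.ofReal : ℝ → ℂ)) *ᵥ v = μ • v := by
      have := hveq
      rw [Matrix.sub_mulVec, Matrix.smul_mulVec, Matrix.one_mulVec,
        sub_eq_zero] at this
      exact this.symm
    have hprod : (hatS₂.map (Complex.ofReal : ℝ → ℂ)) *
        (W.map (Complex.ofReal : ℝ → ℂ)) = S₂.map (Complex.ofReal : ℝ → ℂ) := by
      rw [hcoe, ← Matrix.map_mul, hW, ← Matrix.mul_assoc, hhatinv, Matrix.one_mul]
    calc (S₂.map (Complex.ofReal : ℝ → ℂ)) *ᵥ v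
        = (hatS₂.map (Complex.ofReal : ℝ → ℂ)) *ᵥ
            ((W.map (Complex.ofReal : ℝ → ℂ)) *ᵥ v) := by
          rw [Matrix.mulVec_mulVec, hprod]
      _ = μ • ((hatS₂.map (Complex.ofReal : ℝ → ℂ)) *ᵥ v) := by
          rw [hWv, Matrix.mulVec_smul]
end

section
/- Assume A, S₁ and Ŝ₂ are invertible, and let M̂_D = diag(A, S₁, Ŝ₂). Suppose λ ∈ ℝ with λ ≠ −1, and (0, y, z) ∈ ℝⁿ × ℝᵐ × ℝᵖ with (y, z) ≠ (0, 0) satisfies M̂_D⁻¹ K (0, y, z)ᵀ = λ (0, y, z)ᵀ. Then z ≠ 0 and Ŝ₂⁻¹ S₂ z = λ(λ+1) z; consequently μ := λ(λ+1) is an eigenvalue of Ŝ₂⁻¹S₂ and λ = (−1 + √(1+4μ))/2 or λ = (−1 − √(1+4μ))/2. -/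
open Matrix

/-- With `A`, `S₁`, `Ŝ₂` invertible and `M̂_D = diag(A, S₁, Ŝ₂)`:
if `λ ≠ −1` and `(0, y, z)` with `(y, z) ≠ (0, 0)` satisfies
`M̂_D⁻¹ K (0, y, z)ᵀ = λ (0, y, z)ᵀ`, then `z ≠ 0` and `Ŝ₂⁻¹ S₂ z = λ(λ+1) z`;
consequently `μ := λ(λ+1)` is an eigenvalue of `Ŝ₂⁻¹S₂` and
`λ = (−1 + √(1+4μ))/2` or `λ = (−1 − √(1+4μ))/2`. -/
theorem stmt_2 (n m p : ℕ)
    (A : Matrix (Fin n) (Fin n) ℝ) (B : Matrix (Fin m) (Fin n) ℝ)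
    (C : Matrix (Fin p) (Fin m) ℝ) (D : Matrix (Fin m) (Fin m) ℝ)
    (S₁ : Matrix (Fin m) (Fin m) ℝ) (hS₁def : S₁ = D + B * A⁻¹ * Bᵀ)
    (S₂ : Matrix (Fin p) (Fin p) ℝ) (hS₂def : S₂ = C * S₁⁻¹ * Cᵀ)
    (hatS₂ : Matrix (Fin p) (Fin p) ℝ)
    (hA : IsUnit A.det) (hS₁ : IsUnit S₁.det) (hhatS₂ : IsUnit hatS₂.det)
    (K MD : Matrix ((Fin n ⊕ Fin m) ⊕ Fin p) ((Fin n ⊕ Fin m) ⊕ Fin p) ℝ)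
    (hK : K = fromBlocks (fromBlocks A Bᵀ B (-D)) (fromRows 0 Cᵀ) (fromCols 0 C) 0)
    (hMD : MD = fromBlocks (fromBlocks A 0 0 S₁) 0 0 hatS₂)
    (lam : ℝ) (hlam : lam ≠ -1)
    (y : Fin m → ℝ) (z : Fin p → ℝ) (hyz : ¬(y = 0 ∧ z = 0))
    (heig : (MD⁻¹ * K) *ᵥ Sum.elim (Sum.elim (0 : Fin n → ℝ) y) z =
      lam • Sum.elim (Sum.elim (0 : Fin n → ℝ) y) z) :
    z ≠ 0 ∧ (hatS₂⁻¹ * S₂) *ᵥ z = (lam * (lam + 1)) • z ∧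
      (lam = (-1 + Real.sqrt (1 + 4 * (lam * (lam + 1)))) / 2 ∨
        lam = (-1 - Real.sqrt (1 + 4 * (lam * (lam + 1)))) / 2) := by
  have hlam1 : lam + 1 ≠ 0 := fun h => hlam (by linarith)
  have hMDdet : IsUnit MD.det := by
    rw [hMD, Matrix.det_fromBlocks_zero₂₁, Matrix.det_fromBlocks_zero₂₁]
    exact (hA.mul hS₁).mul hhatS₂
  have heig' : K *ᵥ Sum.elim (Sum.elim (0 : Fin n → ℝ) y) z =
      lam • (MD *ᵥ Sum.elim (Sum.elim (0 : Fin n → ℝ) y) z) := by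
    have h := congrArg (MD *ᵥ ·) heig
    simpa [Matrix.mulVec_mulVec, ← Matrix.mul_assoc,
      Matrix.mul_nonsing_inv MD hMDdet, Matrix.mulVec_smul] using h
  rw [hK, hMD] at heig'
  simp [Matrix.fromBlocks_mulVec, Matrix.fromRows_mulVec,
    Matrix.fromCols_mulVec_sumElim, Matrix.mulVec_zero, Matrix.zero_mulVec] at heig'
  have e1 : Bᵀ *ᵥ y = 0 := by
    funext i; simpa using congrFun heig' (Sum.inl (Sum.inl i))
  have e2 : (-D) *ᵥ y + Cᵀ *ᵥ z = lam • (S₁ *ᵥ y) := by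
    funext i; simpa using congrFun heig' (Sum.inl (Sum.inr i))
  have e3 : C *ᵥ y = lam • (hatS₂ *ᵥ z) := by
    funext i; simpa using congrFun heig' (Sum.inr i)
  have hS1y : S₁ *ᵥ y = D *ᵥ y := by
    rw [hS₁def, Matrix.add_mulVec, ← Matrix.mulVec_mulVec, ← Matrix.mulVec_mulVec, e1]
    simp
  have e2' : Cᵀ *ᵥ z = (lam + 1) • (S₁ *ᵥ y) := by
    funext i
    have h := congrFun e2 i
    have h2 := congrFun hS1y i
    simp [Matrix.neg_mulVec, Pi.add_apply, Pi.smul_apply, Pi.neg_apply] at h h2 ⊢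
    rw [h2] at h ⊢
    linarith
  have hSinv : S₁⁻¹ *ᵥ (Cᵀ *ᵥ z) = (lam + 1) • y := by
    rw [e2', Matrix.mulVec_smul, Matrix.mulVec_mulVec, Matrix.nonsing_inv_mul S₁ hS₁,
      Matrix.one_mulVec]
  have hz : z ≠ 0 := by
    intro hz0
    apply hyz
    refine ⟨?_, hz0⟩
    have : (lam + 1) • y = 0 := by
      rw [← hSinv, hz0, Matrix.mulVec_zero, Matrix.mulVec_zero]
    rcases smul_eq_zero.mp this with h | h
    · exact absurd h hlam1
    · exact h
  have hmain : (hatS₂⁻¹ * S₂) *ᵥ z = (lam * (lam + 1)) • z := by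
    rw [hS₂def, ← Matrix.mulVec_mulVec, ← Matrix.mulVec_mulVec, ← Matrix.mulVec_mulVec,
      hSinv, Matrix.mulVec_smul, e3, Matrix.mulVec_smul, Matrix.mulVec_smul, Matrix.mulVec_mulVec,
      Matrix.nonsing_inv_mul hatS₂ hhatS₂, Matrix.one_mulVec, smul_smul]
    ring_nf
  refine ⟨hz, hmain, ?_⟩
  have hsq : 1 + 4 * (lam * (lam + 1)) = (2 * lam + 1) ^ 2 := by ring
  rw [hsq, Real.sqrt_sq_eq_abs]
  rcases abs_cases (2 * lam + 1) with ⟨h, _⟩ | ⟨h, _⟩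
  · left; rw [h]; ring
  · right; rw [h]; ring
end

section
/- (Theorem 2.1, part 1, construction) Under the stated assumptions, for every x ∈ ℝⁿ with Bx = 0 and x ≠ 0, the vector (x, 0, 0) is an eigenvector of the preconditioned matrix T = M̂_D⁻¹ K with eigenvalue λ = 1. -/
open Matrix

lemma mulVec_transpose_eq_zero {m n : ℕ} (B : Matrix (Fin m) (Fin n) ℝ)
    (hB : B.rank = m) {y : Fin m → ℝ} (hy : Bᵀ *ᵥ y = 0) : y = 0 := by
  have hr : Bᵀ.rank = m := by rw [Matrix.rank_transpose]; exact hB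
  have h1 := LinearMap.finrank_range_add_finrank_ker (Bᵀ.mulVecLin)
  have hdom : Module.finrank ℝ (Fin m → ℝ) = m := by simp
  have hrange : Module.finrank ℝ (LinearMap.range Bᵀ.mulVecLin) = m := hr
  rw [hrange, hdom] at h1
  have hker : Module.finrank ℝ (LinearMap.ker Bᵀ.mulVecLin) = 0 := by omega
  have : LinearMap.ker Bᵀ.mulVecLin = ⊥ := Submodule.finrank_eq_zero.mp hker
  have hmem : y ∈ LinearMap.ker Bᵀ.mulVecLin := by
    rw [LinearMap.mem_ker, Matrix.mulVecLin_apply]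
    exact hy
  rw [this] at hmem
  simpa using hmem

/-- Theorem 2.1, part 1, construction: with `A` SPD, `D = 0`, `B` of full
row rank `m`, `C` of full row rank `p`, `Ŝ₂` SPD, and `T = M̂_D⁻¹ K`: for every
`x ∈ ℝⁿ` with `Bx = 0` and `x ≠ 0`, the vector `(x, 0, 0)` is an eigenvector of `T`
with eigenvalue `1`. -/
theorem stmt_3 (n m p : ℕ) (hnm : m ≤ n) (hmp : p ≤ m)
    (A : Matrix (Fin n) (Fin n) ℝ) (hA : A.PosDef)
    (B : Matrix (Fin m) (Fin n) ℝ) (hB : B.rank = m)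
    (C : Matrix (Fin p) (Fin m) ℝ) (hC : C.rank = p)
    (hatS₂ : Matrix (Fin p) (Fin p) ℝ) (hhatS₂ : hatS₂.PosDef)
    (S₁ : Matrix (Fin m) (Fin m) ℝ) (hS₁def : S₁ = B * A⁻¹ * Bᵀ)
    (S₂ : Matrix (Fin p) (Fin p) ℝ) (hS₂def : S₂ = C * S₁⁻¹ * Cᵀ)
    (K MD T : Matrix ((Fin n ⊕ Fin m) ⊕ Fin p) ((Fin n ⊕ Fin m) ⊕ Fin p) ℝ)
    (hK : K = fromBlocks (fromBlocks A Bᵀ B 0) (fromRows 0 Cᵀ) (fromCols 0 C) 0)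
    (hMD : MD = fromBlocks (fromBlocks A 0 0 S₁) 0 0 hatS₂)
    (hT : T = MD⁻¹ * K)
    (x : Fin n → ℝ) (hx : B *ᵥ x = 0) (hx0 : x ≠ 0) :
    Module.End.HasEigenvector T.mulVecLin 1
      (Sum.elim (Sum.elim x (0 : Fin m → ℝ)) (0 : Fin p → ℝ)) := by
  set v : ((Fin n ⊕ Fin m) ⊕ Fin p) → ℝ :=
    Sum.elim (Sum.elim x (0 : Fin m → ℝ)) (0 : Fin p → ℝ) with hv
  -- S₁ is positive definite
  have hAinv : A⁻¹.PosDef := hA.inv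
  have hS₁ : S₁.PosDef := by
    refine Matrix.PosDef.of_dotProduct_mulVec_pos ?_ ?_
    · rw [hS₁def]
      have hH := hAinv.isHermitian
      simp only [Matrix.IsHermitian, Matrix.conjTranspose_mul,
        Matrix.conjTranspose_eq_transpose_of_trivial] at hH ⊢
      rw [Matrix.transpose_mul, Matrix.transpose_mul, Matrix.transpose_transpose, hH,
        Matrix.mul_assoc]
    · intro y hy
      have hBty : Bᵀ *ᵥ y ≠ 0 := fun h => hy (mulVec_transpose_eq_zero B hB h)
      have := hAinv.dotProduct_mulVec_pos hBty
      rw [hS₁def]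
      have heq : (star y) ⬝ᵥ (B * A⁻¹ * Bᵀ) *ᵥ y = (star (Bᵀ *ᵥ y)) ⬝ᵥ A⁻¹ *ᵥ (Bᵀ *ᵥ y) := by
        simp only [star_trivial]
        rw [← Matrix.mulVec_mulVec, ← Matrix.mulVec_mulVec, Matrix.dotProduct_mulVec,
          ← Matrix.mulVec_transpose]
      rw [heq]
      exact hAinv.dotProduct_mulVec_pos hBty
  -- MD is invertible
  have hdet : IsUnit MD.det := by
    rw [hMD, Matrix.det_fromBlocks_zero₂₁, Matrix.det_fromBlocks_zero₂₁]
    exact (mul_pos (mul_pos hA.det_pos hS₁.det_pos) hhatS₂.det_pos).ne'.isUnit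
  -- K *ᵥ v = MD *ᵥ v
  have hKv : K *ᵥ v = MD *ᵥ v := by
    rw [hK, hMD, hv]
    rw [Matrix.fromBlocks_mulVec, Matrix.fromBlocks_mulVec,
      Matrix.fromBlocks_mulVec, Matrix.fromBlocks_mulVec]
    simp [Matrix.fromRows_mulVec, Matrix.fromCols_mulVec_sumElim, hx]
  -- conclude
  have hTv : T *ᵥ v = v := by
    rw [hT, ← Matrix.mulVec_mulVec, hKv, Matrix.mulVec_mulVec,
      Matrix.nonsing_inv_mul MD hdet, Matrix.one_mulVec]
  have hvne : v ≠ 0 := by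
    intro h
    apply hx0
    funext i
    have := congrFun h (Sum.inl (Sum.inl i))
    simpa [hv] using this
  refine ⟨?_, hvne⟩
  rw [Module.End.mem_eigenspace_iff, Matrix.mulVecLin_apply, hTv, one_smul]
end

section
/- (Theorem 2.1, part 1, characterization) Under the stated assumptions, the eigenspace of T = M̂_D⁻¹ K for the eigenvalue 1 equals {(x, 0, 0) : x ∈ ℝⁿ, Bx = 0}; that is, every eigenvector (x, y, z) of T with eigenvalue 1 satisfies y = 0, z = 0 and Bx = 0, and the geometric multiplicity of the eigenvalue 1 is n − m. -/
open Matrix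

private noncomputable def incl3 (n m p : ℕ) :
    (Fin n → ℝ) →ₗ[ℝ] ((Fin n ⊕ Fin m) ⊕ Fin p → ℝ) where
  toFun x := Sum.elim (Sum.elim x 0) 0
  map_add' x y := by funext i; rcases i with (i | i) | i <;> simp
  map_smul' c x := by funext i; rcases i with (i | i) | i <;> simp

private lemma elim3_eq_iff {n m p : ℕ} {x₁ x₂ : Fin n → ℝ} {y₁ y₂ : Fin m → ℝ}
    {z₁ z₂ : Fin p → ℝ} :
    Sum.elim (Sum.elim x₁ y₁) z₁ = Sum.elim (Sum.elim x₂ y₂) z₂ ↔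
      x₁ = x₂ ∧ y₁ = y₂ ∧ z₁ = z₂ := by
  constructor
  · intro h
    exact ⟨funext fun i => congrFun h (.inl (.inl i)),
      funext fun i => congrFun h (.inl (.inr i)),
      funext fun i => congrFun h (.inr i)⟩
  · rintro ⟨rfl, rfl, rfl⟩; rfl

private lemma mulVec_cancel {k : ℕ} {M : Matrix (Fin k) (Fin k) ℝ} (h : IsUnit M.det)
    {w : Fin k → ℝ} (hw : M *ᵥ w = 0) : w = 0 := by
  have hinj : Function.Injective M.mulVec :=
    Matrix.mulVec_injective_iff_isUnit.mpr ((Matrix.isUnit_iff_isUnit_det M).mpr h)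
  apply hinj
  simpa [Matrix.mulVec_zero] using hw

/-- Theorem 2.1, part 1, characterization: the eigenspace of
`T = M̂_D⁻¹ K` for the eigenvalue `1` equals `{(x, 0, 0) : x ∈ ℝⁿ, Bx = 0}`; every
eigenvector `(x, y, z)` of `T` with eigenvalue `1` satisfies `y = 0`, `z = 0` and
`Bx = 0`, and the geometric multiplicity of the eigenvalue `1` is `n − m`. -/
theorem stmt_4 (n m p : ℕ) (hnm : m ≤ n) (hmp : p ≤ m)
    (A : Matrix (Fin n) (Fin n) ℝ) (hA : A.PosDef)
    (B : Matrix (Fin m) (Fin n) ℝ) (hB : B.rank = m)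
    (C : Matrix (Fin p) (Fin m) ℝ) (hC : C.rank = p)
    (hatS₂ : Matrix (Fin p) (Fin p) ℝ) (hhatS₂ : hatS₂.PosDef)
    (S₁ : Matrix (Fin m) (Fin m) ℝ) (hS₁def : S₁ = B * A⁻¹ * Bᵀ)
    (S₂ : Matrix (Fin p) (Fin p) ℝ) (hS₂def : S₂ = C * S₁⁻¹ * Cᵀ)
    (K MD T : Matrix ((Fin n ⊕ Fin m) ⊕ Fin p) ((Fin n ⊕ Fin m) ⊕ Fin p) ℝ)
    (hK : K = fromBlocks (fromBlocks A Bᵀ B 0) (fromRows 0 Cᵀ) (fromCols 0 C) 0)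
    (hMD : MD = fromBlocks (fromBlocks A 0 0 S₁) 0 0 hatS₂)
    (hT : T = MD⁻¹ * K) :
    (∀ v : (Fin n ⊕ Fin m) ⊕ Fin p → ℝ,
        v ∈ Module.End.eigenspace T.mulVecLin 1 ↔
          ∃ x : Fin n → ℝ, B *ᵥ x = 0 ∧
            v = Sum.elim (Sum.elim x (0 : Fin m → ℝ)) (0 : Fin p → ℝ)) ∧
      Module.finrank ℝ (Module.End.eigenspace T.mulVecLin 1) = n - m := by
  have hAinv : A⁻¹.PosDef := hA.inv
  -- `Bᵀ` has trivial kernel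
  have hBT : ∀ y : Fin m → ℝ, Bᵀ *ᵥ y = 0 → y = 0 := by
    have h1 : Bᵀ.rank = m := by rw [Matrix.rank_transpose]; exact hB
    have h2 := LinearMap.finrank_range_add_finrank_ker (Bᵀ.mulVecLin)
    rw [Module.finrank_fintype_fun_eq_card, Fintype.card_fin] at h2
    have h3 : Module.finrank ℝ (LinearMap.range Bᵀ.mulVecLin) = m := h1
    have hker : LinearMap.ker Bᵀ.mulVecLin = ⊥ :=
      Submodule.finrank_eq_zero.mp (by omega)
    exact Matrix.ker_mulVecLin_eq_bot_iff.mp hker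
  -- `S₁` is positive definite
  have hS₁ : S₁.PosDef := by
    rw [hS₁def, Matrix.posDef_iff_dotProduct_mulVec]
    constructor
    · have hAH : A⁻¹ᴴ = A⁻¹ := hAinv.isHermitian
      show (B * A⁻¹ * Bᵀ)ᴴ = B * A⁻¹ * Bᵀ
      have h1 : Bᵀᴴ = B := by ext i j; simp [Matrix.conjTranspose_apply]
      have h2 : Bᴴ = Bᵀ := by ext i j; simp [Matrix.conjTranspose_apply]
      rw [Matrix.conjTranspose_mul, Matrix.conjTranspose_mul, h1, h2, hAH,
        ← Matrix.mul_assoc]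
    · intro x hx
      have hBx : Bᵀ *ᵥ x ≠ 0 := fun h => hx (hBT x h)
      have hpos := hAinv.dotProduct_mulVec_pos hBx
      have hrw : star x ⬝ᵥ ((B * A⁻¹ * Bᵀ) *ᵥ x) =
          star (Bᵀ *ᵥ x) ⬝ᵥ (A⁻¹ *ᵥ (Bᵀ *ᵥ x)) := by
        rw [star_trivial, star_trivial, ← Matrix.mulVec_mulVec, ← Matrix.mulVec_mulVec,
          Matrix.dotProduct_mulVec x B, ← Matrix.transpose_transpose B,
          Matrix.vecMul_transpose, Matrix.transpose_transpose]
      rw [hrw]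
      exact hpos
  -- `MD` is invertible
  have hdet : IsUnit MD.det := by
    rw [hMD, Matrix.det_fromBlocks_zero₂₁, Matrix.det_fromBlocks_zero₂₁]
    exact ((hA.det_pos.ne'.isUnit.mul hS₁.det_pos.ne'.isUnit).mul
      hhatS₂.det_pos.ne'.isUnit)
  -- key characterization
  have key : ∀ v : (Fin n ⊕ Fin m) ⊕ Fin p → ℝ,
      v ∈ Module.End.eigenspace T.mulVecLin 1 ↔
        ∃ x : Fin n → ℝ, B *ᵥ x = 0 ∧
          v = Sum.elim (Sum.elim x (0 : Fin m → ℝ)) (0 : Fin p → ℝ) := by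
    intro v
    rw [Module.End.mem_eigenspace_iff]
    simp only [Matrix.mulVecLin_apply, one_smul]
    obtain ⟨x, y, z, rfl⟩ : ∃ x y z, v = Sum.elim (Sum.elim x y) z :=
      ⟨_, _, _, by funext i; rcases i with (i | i) | i <;> rfl⟩
    set v := Sum.elim (Sum.elim x y) z with hv
    have hiff : T *ᵥ v = v ↔ K *ᵥ v = MD *ᵥ v := by
      rw [hT]
      constructor
      · intro h
        calc K *ᵥ v = ((MD * MD⁻¹) * K) *ᵥ v := by
              rw [Matrix.mul_nonsing_inv _ hdet, Matrix.one_mul]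
          _ = MD *ᵥ ((MD⁻¹ * K) *ᵥ v) := by
              rw [Matrix.mulVec_mulVec, Matrix.mul_assoc]
          _ = MD *ᵥ v := by rw [h]
      · intro h
        calc (MD⁻¹ * K) *ᵥ v = MD⁻¹ *ᵥ (K *ᵥ v) := by rw [Matrix.mulVec_mulVec]
          _ = MD⁻¹ *ᵥ (MD *ᵥ v) := by rw [h]
          _ = ((MD⁻¹ * MD)) *ᵥ v := by rw [Matrix.mulVec_mulVec]
          _ = v := by rw [Matrix.nonsing_inv_mul _ hdet, Matrix.one_mulVec]
    have hKv : K *ᵥ v =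
        Sum.elim (Sum.elim (A *ᵥ x + Bᵀ *ᵥ y) (B *ᵥ x + Cᵀ *ᵥ z)) (C *ᵥ y) := by
      rw [hv, hK, Matrix.fromBlocks_mulVec]
      simp only [Sum.elim_comp_inl, Sum.elim_comp_inr]
      rw [Matrix.fromBlocks_mulVec]
      simp only [Sum.elim_comp_inl, Sum.elim_comp_inr]
      rw [Matrix.fromRows_mulVec, Matrix.fromCols_mulVec_sumElim]
      funext i; rcases i with (i | i) | i <;> simp
    have hMDv : MD *ᵥ v =
        Sum.elim (Sum.elim (A *ᵥ x) (S₁ *ᵥ y)) (hatS₂ *ᵥ z) := by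
      rw [hv, hMD, Matrix.fromBlocks_mulVec]
      simp only [Sum.elim_comp_inl, Sum.elim_comp_inr]
      rw [Matrix.fromBlocks_mulVec]
      simp only [Sum.elim_comp_inl, Sum.elim_comp_inr]
      funext i; rcases i with (i | i) | i <;> simp
    rw [hiff, hKv, hMDv, elim3_eq_iff]
    constructor
    · rintro ⟨e1, e2, e3⟩
      have hy0 : y = 0 := hBT y (by
        have := e1
        rwa [add_eq_left] at this)
      subst hy0
      have hz0 : z = 0 := mulVec_cancel hhatS₂.det_pos.ne'.isUnit (by
        rw [← e3, Matrix.mulVec_zero])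
      subst hz0
      refine ⟨x, ?_, rfl⟩
      have := e2
      simpa [Matrix.mulVec_zero] using this
    · rintro ⟨x', hx', hv'⟩
      rw [hv] at hv'
      obtain ⟨rfl, rfl, rfl⟩ := elim3_eq_iff.mp hv'
      refine ⟨by simp, by simp [hx'], by simp⟩
  refine ⟨key, ?_⟩
  -- the eigenspace is the image of the kernel of `B`
  have hinj : Function.Injective (incl3 n m p) := by
    intro a b h
    funext i
    exact congrFun h (.inl (.inl i))
  have heq : Module.End.eigenspace T.mulVecLin 1 =
      Submodule.map (incl3 n m p) (LinearMap.ker B.mulVecLin) := by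
    ext v
    rw [key v]
    simp only [Submodule.mem_map, LinearMap.mem_ker, Matrix.mulVecLin_apply]
    constructor
    · rintro ⟨x, hx, rfl⟩; exact ⟨x, hx, rfl⟩
    · rintro ⟨x, hx, rfl⟩; exact ⟨x, hx, rfl⟩
  rw [heq, ← LinearEquiv.finrank_eq
    (Submodule.equivMapOfInjective (incl3 n m p) hinj (LinearMap.ker B.mulVecLin))]
  have h2 := LinearMap.finrank_range_add_finrank_ker (B.mulVecLin)
  rw [Module.finrank_fintype_fun_eq_card, Fintype.card_fin] at h2
  have h3 : Module.finrank ℝ (LinearMap.range B.mulVecLin) = m := hB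
  omega
end

section
/- (Theorem 2.1, part 1, multiplicity) Under the stated assumptions, the algebraic multiplicity of λ = 1 as a root of the characteristic polynomial of T = M̂_D⁻¹ K is exactly n − m. -/
set_option maxHeartbeats 1000000
set_option synthInstance.maxHeartbeats 400000

open Matrix Polynomial

section helpers
variable {F : Type*} [Field F]

lemma aux_map_inv {k : ℕ} (f : ℝ →+* F)
    (M : Matrix (Fin k) (Fin k) ℝ) (h : IsUnit M.det) :
    (M⁻¹).map f = (M.map f)⁻¹ := by
  symm
  apply Matrix.inv_eq_right_inv
  rw [← Matrix.map_mul, Matrix.mul_nonsing_inv _ h, Matrix.map_one _ f.map_zero f.map_one]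

lemma aux_fromRows_map {k l r : ℕ} (f : ℝ →+* F) (M : Matrix (Fin k) (Fin r) ℝ)
    (N : Matrix (Fin l) (Fin r) ℝ) :
    (fromRows M N).map f = fromRows (M.map f) (N.map f) := by
  ext (i | i) j <;> rfl

lemma aux_fromColumns_map {k l r : ℕ} (f : ℝ →+* F) (M : Matrix (Fin r) (Fin k) ℝ)
    (N : Matrix (Fin r) (Fin l) ℝ) :
    (fromCols M N).map f = fromCols (M.map f) (N.map f) := by
  ext i (j | j) <;> rfl

end helpers

lemma aux_posdef_conj {k l : ℕ} {A : Matrix (Fin l) (Fin l) ℝ} (hA : A.PosDef)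
    {B : Matrix (Fin k) (Fin l) ℝ} (hB : B.rank = k) :
    (B * A * Bᵀ).PosDef := by
  have hinj : Function.Injective (Bᵀ.mulVecLin) := by
    rw [← LinearMap.ker_eq_bot]
    have h1 := LinearMap.finrank_range_add_finrank_ker (Bᵀ.mulVecLin)
    have h2 : Module.finrank ℝ (LinearMap.range Bᵀ.mulVecLin) = k := by
      have := Matrix.rank_transpose B
      rw [hB] at this
      simpa [Matrix.rank] using this
    rw [h2] at h1
    simp only [Module.finrank_fin_fun] at h1
    have : Module.finrank ℝ (LinearMap.ker Bᵀ.mulVecLin) = 0 := by omega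
    exact Submodule.finrank_eq_zero.mp this
  refine Matrix.PosDef.of_dotProduct_mulVec_pos ?_ ?_
  · have := Matrix.isHermitian_mul_mul_conjTranspose B hA.isHermitian
    rwa [Matrix.conjTranspose_eq_transpose_of_trivial] at this
  · intro x hx
    have hy : Bᵀ *ᵥ x ≠ 0 := by
      intro h
      apply hx
      apply hinj
      simpa [Matrix.mulVecLin, Matrix.mulVec_transpose] using h
    have := hA.dotProduct_mulVec_pos hy
    convert this using 1
    simp only [star_trivial]
    rw [← Matrix.mulVec_mulVec, ← Matrix.mulVec_mulVec, Matrix.dotProduct_mulVec x B,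
      Matrix.mulVec_transpose]

lemma fromBlocks_sub' {α : Type*} [AddGroup α] {n m : Type*}
    (A A' : Matrix n n α) (B B' : Matrix n m α) (C C' : Matrix m n α) (D D' : Matrix m m α) :
    fromBlocks A B C D - fromBlocks A' B' C' D' =
      fromBlocks (A - A') (B - B') (C - C') (D - D') := by
  ext (i | i) (j | j) <;> simp
lemma aux_det {nn mm pp : ℕ} {F : Type*} [Field F]
    (A' : Matrix (Fin nn) (Fin nn) F) (B' : Matrix (Fin mm) (Fin nn) F)
    (C' : Matrix (Fin pp) (Fin mm) F)
    (S₁' : Matrix (Fin mm) (Fin mm) F) (Sh S₂' : Matrix (Fin pp) (Fin pp) F)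
    (x u g : F) (hx : x ≠ 0) (hu : u ≠ 0) (hg : g ≠ 0)
    (hgdef : g = x * u - 1)
    (hdA : A'.det ≠ 0) (hdS₁ : S₁'.det ≠ 0) (hdSh : Sh.det ≠ 0)
    (hS₁def : S₁' = B' * A'⁻¹ * B'ᵀ) (hS₂def : S₂' = C' * S₁'⁻¹ * C'ᵀ) :
    u ^ mm * (x * g) ^ pp *
      (fromBlocks (fromBlocks (u • A') (-B'ᵀ) (-B') (x • S₁'))
        (fromRows 0 (-C'ᵀ)) (fromCols 0 (-C')) (x • Sh)).det
    = u ^ nn * g ^ mm * x ^ pp * A'.det * S₁'.det *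
        ((x * g) • Sh - u • S₂').det := by
  have hc : x - u⁻¹ ≠ 0 := by
    have h : x - u⁻¹ = g / u := by field_simp [hgdef]; exact hgdef.symm
    rw [h]; exact div_ne_zero hg hu
  -- invertibility instances
  haveI instSh : Invertible (x • Sh) :=
    Matrix.invertibleOfIsUnitDet _ (Ne.isUnit (by
      rw [Matrix.det_smul]; exact mul_ne_zero (pow_ne_zero _ hx) hdSh))
  haveI instA : Invertible (u • A') :=
    Matrix.invertibleOfIsUnitDet _ (Ne.isUnit (by
      rw [Matrix.det_smul]; exact mul_ne_zero (pow_ne_zero _ hu) hdA))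
  have hShinv : ⅟(x • Sh) = x⁻¹ • Sh⁻¹ := by
    apply invOf_eq_right_inv
    rw [Matrix.smul_mul, Matrix.mul_smul, smul_smul, mul_inv_cancel₀ hx,
      Matrix.mul_nonsing_inv _ (Ne.isUnit hdSh), one_smul]
  have hAinv : ⅟(u • A') = u⁻¹ • A'⁻¹ := by
    apply invOf_eq_right_inv
    rw [Matrix.smul_mul, Matrix.mul_smul, smul_smul, mul_inv_cancel₀ hu,
      Matrix.mul_nonsing_inv _ (Ne.isUnit hdA), one_smul]
  rw [Matrix.det_fromBlocks₂₂, hShinv]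
  -- simplify the Schur complement of the (3,3) block
  have h1 : fromRows (0 : Matrix (Fin nn) (Fin pp) F) (-C'ᵀ) * (x⁻¹ • Sh⁻¹) *
        fromCols (0 : Matrix (Fin pp) (Fin nn) F) (-C')
      = fromBlocks 0 0 0 (x⁻¹ • (C'ᵀ * Sh⁻¹ * C')) := by
    rw [Matrix.fromRows_mul, Matrix.fromRows_mul_fromCols]
    congr 1 <;> simp [Matrix.mul_smul, Matrix.smul_mul, Matrix.mul_assoc]
  rw [h1, fromBlocks_sub']
  simp only [sub_zero]
  rw [Matrix.det_fromBlocks₁₁, hAinv]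
  set M : Matrix (Fin mm) (Fin mm) F := C'ᵀ * Sh⁻¹ * C' with hM
  have h2 : (-B') * (u⁻¹ • A'⁻¹) * (-B'ᵀ) = u⁻¹ • S₁' := by
    simp only [hS₁def, Matrix.neg_mul, Matrix.mul_neg, neg_neg, Matrix.mul_smul,
      Matrix.smul_mul, smul_neg]
  rw [h2]
  set c : F := x - u⁻¹ with hcdef
  have huc : u * c = g := by
    rw [hcdef, hgdef]; field_simp
  have h3 : x • S₁' - x⁻¹ • M - u⁻¹ • S₁' = c • S₁' - x⁻¹ • M := by
    rw [sub_right_comm, ← sub_smul]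
  rw [h3]
  set U : Matrix (Fin mm) (Fin pp) F := S₁'⁻¹ * C'ᵀ with hU
  set V : Matrix (Fin pp) (Fin mm) F := (c⁻¹ * x⁻¹) • (Sh⁻¹ * C') with hV
  have h4 : c • S₁' - x⁻¹ • M = S₁' * (c • ((1 : Matrix (Fin mm) (Fin mm) F) - U * V)) := by
    rw [Matrix.mul_smul, Matrix.mul_sub, Matrix.mul_one, smul_sub]
    congr 1
    have : S₁' * (U * V) = (c⁻¹ * x⁻¹) • M := by
      rw [hU, hV, Matrix.mul_smul, Matrix.mul_smul, hM]
      congr 1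
      rw [← Matrix.mul_assoc, ← Matrix.mul_assoc, ← Matrix.mul_assoc,
        Matrix.mul_nonsing_inv _ (Ne.isUnit hdS₁), Matrix.one_mul]
    rw [this, smul_smul, ← mul_assoc, mul_inv_cancel₀ hc, one_mul]
  rw [h4, Matrix.det_mul]
  simp only [Matrix.det_smul, Fintype.card_fin]
  rw [Matrix.det_one_sub_mul_comm]
  have h5 : V * U = (c⁻¹ * x⁻¹) • (Sh⁻¹ * S₂') := by
    rw [hV, hU, Matrix.smul_mul]
    congr 1
    rw [hS₂def]
    simp only [Matrix.mul_assoc]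
  have h6 : (1 : Matrix (Fin pp) (Fin pp) F) - (c⁻¹ * x⁻¹) • (Sh⁻¹ * S₂')
      = Sh⁻¹ * (Sh - (c⁻¹ * x⁻¹) • S₂') := by
    rw [Matrix.mul_sub, Matrix.nonsing_inv_mul _ (Ne.isUnit hdSh), Matrix.mul_smul]
  rw [h5, h6, Matrix.det_mul, Matrix.det_nonsing_inv, Ring.inverse_eq_inv']
  have h7 : (x * g) • Sh - u • S₂' = (x * g) • (Sh - (c⁻¹ * x⁻¹) • S₂') := by
    rw [smul_sub, smul_smul]
    congr 2
    rw [← huc]; field_simp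
  rw [h7]
  simp only [Matrix.det_smul, Fintype.card_fin]
  have hc2 : c = g * u⁻¹ := by
    rw [← huc]; field_simp
  generalize (Sh - (c⁻¹ * x⁻¹) • S₂').det = D
  rw [hc2]
  field_simp
  have hu' : u ^ mm * u⁻¹ ^ mm = 1 := by rw [← mul_pow, mul_inv_cancel₀ hu, one_pow]
  linear_combination (g ^ mm * D) * hu'

/-- Theorem 2.1, part 1, multiplicity: the algebraic multiplicity of
`λ = 1` as a root of the characteristic polynomial of `T = M̂_D⁻¹ K` is exactly
`n − m`. -/
theorem stmt_5 (n m p : ℕ) (hnm : m ≤ n) (hmp : p ≤ m)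
    (A : Matrix (Fin n) (Fin n) ℝ) (hA : A.PosDef)
    (B : Matrix (Fin m) (Fin n) ℝ) (hB : B.rank = m)
    (C : Matrix (Fin p) (Fin m) ℝ) (hC : C.rank = p)
    (hatS₂ : Matrix (Fin p) (Fin p) ℝ) (hhatS₂ : hatS₂.PosDef)
    (S₁ : Matrix (Fin m) (Fin m) ℝ) (hS₁def : S₁ = B * A⁻¹ * Bᵀ)
    (S₂ : Matrix (Fin p) (Fin p) ℝ) (hS₂def : S₂ = C * S₁⁻¹ * Cᵀ)
    (K MD T : Matrix ((Fin n ⊕ Fin m) ⊕ Fin p) ((Fin n ⊕ Fin m) ⊕ Fin p) ℝ)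
    (hK : K = fromBlocks (fromBlocks A Bᵀ B 0) (fromRows 0 Cᵀ) (fromCols 0 C) 0)
    (hMD : MD = fromBlocks (fromBlocks A 0 0 S₁) 0 0 hatS₂)
    (hT : T = MD⁻¹ * K) :
    T.charpoly.rootMultiplicity 1 = n - m := by
  classical
  subst hT hK hMD
  set K : Matrix ((Fin n ⊕ Fin m) ⊕ Fin p) ((Fin n ⊕ Fin m) ⊕ Fin p) ℝ :=
    fromBlocks (fromBlocks A Bᵀ B 0) (fromRows 0 Cᵀ) (fromCols 0 C) 0 with hK
  set MD : Matrix ((Fin n ⊕ Fin m) ⊕ Fin p) ((Fin n ⊕ Fin m) ⊕ Fin p) ℝ :=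
    fromBlocks (fromBlocks A 0 0 S₁) 0 0 hatS₂ with hMD
  set T : Matrix ((Fin n ⊕ Fin m) ⊕ Fin p) ((Fin n ⊕ Fin m) ⊕ Fin p) ℝ := MD⁻¹ * K with hT
  have hS₁ : S₁.PosDef := by rw [hS₁def]; exact aux_posdef_conj hA.inv hB
  have hdA : A.det ≠ 0 := ne_of_gt hA.det_pos
  have hdS₁ : S₁.det ≠ 0 := ne_of_gt hS₁.det_pos
  have hdSh : hatS₂.det ≠ 0 := ne_of_gt hhatS₂.det_pos
  have hdMD : MD.det = A.det * S₁.det * hatS₂.det := by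
    rw [hMD, Matrix.det_fromBlocks_zero₂₁, Matrix.det_fromBlocks_zero₂₁]
  have hdMD0 : MD.det ≠ 0 := by rw [hdMD]; exact mul_ne_zero (mul_ne_zero hdA hdS₁) hdSh
  have hMDT : MD * T = K := by
    rw [hT, Matrix.mul_nonsing_inv_cancel_left _ _ (Ne.isUnit hdMD0)]
  set D3 : Matrix (Fin p) (Fin p) ℝ[X] :=
      ((X : ℝ[X])^3 - X^2 - X) • hatS₂.map Polynomial.C -
        ((X : ℝ[X]) - 1) • S₂.map Polynomial.C with hD3
  set q : ℝ[X] := Polynomial.C (A.det * S₁.det / MD.det) *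
      ((X : ℝ[X])^2 - X - 1)^(m-p) * D3.det with hq
  have main : T.charpoly = ((X : ℝ[X]) - 1)^(n-m) * q := by
    apply IsFractionRing.injective ℝ[X] (RatFunc ℝ)
    set φ : ℝ[X] →+* RatFunc ℝ := algebraMap ℝ[X] (RatFunc ℝ) with hφ
    set ψ : ℝ →+* RatFunc ℝ := φ.comp Polynomial.C with hψ
    have hCψ : ∀ r : ℝ, φ (Polynomial.C r) = ψ r := fun r => rfl
    set x : RatFunc ℝ := φ X with hxdef
    set u : RatFunc ℝ := x - 1 with hudef
    set g : RatFunc ℝ := x * u - 1 with hgdef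
    have hφinj : Function.Injective φ := IsFractionRing.injective ℝ[X] (RatFunc ℝ)
    have hφ0 : ∀ r : ℝ[X], r ≠ 0 → φ r ≠ 0 := fun r hr h =>
      hr (hφinj (h.trans (map_zero φ).symm))
    have hψ0 : ∀ r : ℝ, r ≠ 0 → ψ r ≠ 0 := by
      intro r hr h
      rw [← hCψ] at h
      exact hr (by simpa using hφinj (h.trans (map_zero φ).symm))
    have hx : x ≠ 0 := hφ0 X Polynomial.X_ne_zero
    have hu : u ≠ 0 := by
      have h1 : u = φ (X - 1) := by rw [map_sub, _root_.map_one, hudef, hxdef]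
      rw [h1]
      refine hφ0 _ ?_
      rw [← Polynomial.C_1]
      exact Polynomial.X_sub_C_ne_zero 1
    have hg : g ≠ 0 := by
      have h1 : g = φ (X * (X - 1) - 1) := by
        rw [map_sub, _root_.map_mul, map_sub, _root_.map_one, hgdef, hudef, hxdef]
      rw [h1]
      refine hφ0 _ ?_
      intro h
      have := congrArg (Polynomial.eval 0) h
      simp at this
    have hdet' : ∀ {κ : Type} [Fintype κ] [DecidableEq κ] (M : Matrix κ κ ℝ),
        (M.map ψ).det = ψ M.det := by
      intro κ _ _ M
      rw [RingHom.map_det, RingHom.mapMatrix_apply]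
    have hdA' : (A.map ψ).det ≠ 0 := by rw [hdet']; exact hψ0 _ hdA
    have hdS₁' : (S₁.map ψ).det ≠ 0 := by rw [hdet']; exact hψ0 _ hdS₁
    have hdSh' : (hatS₂.map ψ).det ≠ 0 := by rw [hdet']; exact hψ0 _ hdSh
    have hS₁m : S₁.map ψ = (B.map ψ) * (A.map ψ)⁻¹ * (B.map ψ)ᵀ := by
      rw [hS₁def, Matrix.map_mul, Matrix.map_mul, aux_map_inv ψ A (Ne.isUnit hdA),
        Matrix.transpose_map]
    have hS₂m : S₂.map ψ = (C.map ψ) * (S₁.map ψ)⁻¹ * (C.map ψ)ᵀ := by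
      rw [hS₂def, Matrix.map_mul, Matrix.map_mul, aux_map_inv ψ S₁ (Ne.isUnit hdS₁),
        Matrix.transpose_map]
    have key : (MD.map ψ).det * φ T.charpoly = (x • MD.map ψ - K.map ψ).det := by
      have hchar : (Matrix.charmatrix T).map φ
          = x • (1 : Matrix ((Fin n ⊕ Fin m) ⊕ Fin p) ((Fin n ⊕ Fin m) ⊕ Fin p) (RatFunc ℝ))
            - T.map ψ := by
        ext i j
        by_cases h : i = j
        · subst h
          simp [Matrix.charmatrix_apply, Matrix.map_apply, Matrix.diagonal_apply_eq,
            Matrix.one_apply_eq, hCψ, hxdef]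
        · simp [Matrix.charmatrix_apply, Matrix.diagonal_apply_ne _ h, Matrix.one_apply_ne h, h,
            Matrix.map_apply, hCψ]
      have hcp : T.charpoly = (Matrix.charmatrix T).det := rfl
      rw [hcp, RingHom.map_det, RingHom.mapMatrix_apply, hchar, ← Matrix.det_mul,
        Matrix.mul_sub, Matrix.mul_smul, Matrix.mul_one, ← Matrix.map_mul, hMDT]
    have hbig : x • MD.map ψ - K.map ψ
        = fromBlocks (fromBlocks (u • A.map ψ) (-(B.map ψ)ᵀ) (-(B.map ψ)) (x • S₁.map ψ))
            (fromRows 0 (-(C.map ψ)ᵀ)) (fromCols 0 (-(C.map ψ))) (x • hatS₂.map ψ) := by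
      rw [hMD, hK]
      ext i j
      rcases i with (i | i) | i <;> rcases j with (j | j) | j <;>
        simp [Matrix.fromBlocks, Matrix.fromRows_apply_inl, Matrix.fromRows_apply_inr, Matrix.fromCols, Matrix.map_apply,
          Matrix.sub_apply, Matrix.smul_apply, Matrix.neg_apply, Matrix.transpose_apply,
          smul_eq_mul, hudef] <;> ring
    have hdetbig := aux_det (A.map ψ) (B.map ψ) (C.map ψ) (S₁.map ψ) (hatS₂.map ψ) (S₂.map ψ)
      x u g hx hu hg hgdef hdA' hdS₁' hdSh' hS₁m hS₂m
    have hD3m : D3.map φ = (x * g) • hatS₂.map ψ - u • S₂.map ψ := by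
      ext i j
      simp only [hD3, Matrix.map_apply, Matrix.sub_apply, Matrix.smul_apply, smul_eq_mul,
        map_sub, _root_.map_mul, map_pow, _root_.map_one, hCψ]
      rw [hgdef, hudef, hxdef]
      ring
    have hφq : φ (((X : ℝ[X]) - 1)^(n-m) * q)
        = u^(n-m) * (ψ (A.det * S₁.det / MD.det) * g^(m-p)
            * ((x * g) • hatS₂.map ψ - u • S₂.map ψ).det) := by
      simp only [hq, _root_.map_mul, map_pow, map_sub, _root_.map_one]
      rw [RingHom.map_det, RingHom.mapMatrix_apply, hD3m, hCψ, ← hxdef,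
        show x^2 - x - 1 = g from by rw [hgdef, hudef]; ring,
        show x - 1 = u from hudef.symm]
    have hcoef : u^m * (x*g)^p ≠ 0 :=
      mul_ne_zero (pow_ne_zero _ hu) (pow_ne_zero _ (mul_ne_zero hx hg))
    have hMne : (MD.map ψ).det ≠ 0 := by
      rw [hdet']
      exact hψ0 _ hdMD0
    have hψMD : ψ MD.det = (A.map ψ).det * (S₁.map ψ).det * (hatS₂.map ψ).det := by
      rw [hdMD, _root_.map_mul, _root_.map_mul, ← hdet' A, ← hdet' S₁, ← hdet' hatS₂]
    apply mul_left_cancel₀ hMne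
    apply mul_left_cancel₀ hcoef
    rw [key, hbig, hdetbig, hφq, map_div₀, _root_.map_mul, ← hdet' A, ← hdet' S₁,
      hdet' MD, hψMD, ← pow_sub_mul_pow u hnm, ← pow_sub_mul_pow g hmp]
    simp only [mul_pow]
    field_simp [hdA', hdS₁', hdSh']
  have hD3eval : D3.det.eval 1 = (-1 : ℝ)^p * hatS₂.det := by
    have h1 : D3.det.eval 1 = (D3.map (Polynomial.evalRingHom (1:ℝ))).det := by
      have := RingHom.map_det (Polynomial.evalRingHom (1:ℝ)) D3
      simpa [RingHom.mapMatrix_apply] using this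
    have h2 : D3.map (Polynomial.evalRingHom (1:ℝ)) = -hatS₂ := by
      ext i j
      simp [hD3, Matrix.map_apply, Matrix.sub_apply, Matrix.smul_apply, smul_eq_mul]
    rw [h1, h2, Matrix.det_neg, Fintype.card_fin]
  have hq1 : q.eval 1 ≠ 0 := by
    rw [hq]
    simp only [eval_mul, eval_pow, eval_C, eval_sub, eval_X, eval_one, hD3eval]
    refine mul_ne_zero (mul_ne_zero ?_ ?_) ?_
    · exact div_ne_zero (mul_ne_zero hdA hdS₁) hdMD0
    · exact pow_ne_zero _ (by norm_num)
    · exact mul_ne_zero (pow_ne_zero _ (by norm_num)) hdSh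
  rw [main]
  have hne : (((X:ℝ[X]) - 1)^(n-m) * q) ≠ 0 := by
    rw [← main]; exact (Matrix.charpoly_monic T).ne_zero
  rw [Polynomial.rootMultiplicity_mul hne]
  have h1 : ((X : ℝ[X]) - 1) = X - Polynomial.C 1 := by rw [Polynomial.C_1]
  rw [h1, Polynomial.rootMultiplicity_X_sub_C_pow,
    Polynomial.rootMultiplicity_eq_zero (by simpa [Polynomial.IsRoot] using hq1), add_zero]
end

section
/- (Theorem 2.1, part 2, construction) Under the stated assumptions, let λ ∈ ℝ satisfy λ² = λ + 1 (i.e. λ = (1 ± √5)/2), let y ∈ ℝᵐ with Cy = 0 and y ≠ 0, and set x = (λ − 1)⁻¹ A⁻¹ Bᵀ y. Then (x, y, 0) is an eigenvector of T = M̂_D⁻¹ K with eigenvalue λ. -/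
open Matrix

lemma aux_posdef_BABt {n m : ℕ} (A : Matrix (Fin n) (Fin n) ℝ) (hA : A.PosDef)
    (B : Matrix (Fin m) (Fin n) ℝ) (hB : B.rank = m) :
    (B * A⁻¹ * Bᵀ).PosDef := by
  have hAinv : (A⁻¹).PosDef := hA.inv
  have hAsym : (A⁻¹)ᵀ = A⁻¹ := hAinv.isHermitian
  have hrows : LinearIndependent ℝ (fun i => B i) := by
    rw [linearIndependent_iff_card_eq_finrank_span]
    rw [Matrix.rank_eq_finrank_span_row] at hB
    simp [Set.finrank, ← hB]
    rfl
  have hinj : Function.Injective B.vecMul := Matrix.vecMul_injective_iff.mpr hrows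
  refine posDef_iff_dotProduct_mulVec.mpr ⟨?_, ?_⟩
  · show (B * A⁻¹ * Bᵀ)ᴴ = _
    simp only [conjTranspose_eq_transpose_of_trivial, Matrix.transpose_mul,
      Matrix.transpose_transpose, hAsym, Matrix.mul_assoc]
  · intro v hv
    have hBv : Bᵀ *ᵥ v ≠ 0 := by
      rw [Matrix.mulVec_transpose]
      intro h
      exact hv (by simpa using hinj (a₁ := v) (a₂ := 0) (by simpa using h))
    have h2 := hAinv.dotProduct_mulVec_pos hBv
    have : v ⬝ᵥ ((B * A⁻¹ * Bᵀ) *ᵥ v) = (Bᵀ *ᵥ v) ⬝ᵥ (A⁻¹ *ᵥ (Bᵀ *ᵥ v)) := by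
      rw [← Matrix.mulVec_mulVec, ← Matrix.mulVec_mulVec, Matrix.dotProduct_mulVec v B,
        ← Matrix.mulVec_transpose]
    simpa [star, this] using h2

/-- Theorem 2.1, part 2, construction: let `λ` satisfy `λ² = λ + 1`
(i.e. `λ = (1 ± √5)/2`), let `y ≠ 0` with `Cy = 0`, and set
`x = (λ − 1)⁻¹ A⁻¹ Bᵀ y`. Then `(x, y, 0)` is an eigenvector of `T = M̂_D⁻¹ K`
with eigenvalue `λ`. -/
theorem stmt_6 (n m p : ℕ) (hnm : m ≤ n) (hmp : p ≤ m)
    (A : Matrix (Fin n) (Fin n) ℝ) (hA : A.PosDef)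
    (B : Matrix (Fin m) (Fin n) ℝ) (hB : B.rank = m)
    (C : Matrix (Fin p) (Fin m) ℝ) (hC : C.rank = p)
    (hatS₂ : Matrix (Fin p) (Fin p) ℝ) (hhatS₂ : hatS₂.PosDef)
    (S₁ : Matrix (Fin m) (Fin m) ℝ) (hS₁def : S₁ = B * A⁻¹ * Bᵀ)
    (S₂ : Matrix (Fin p) (Fin p) ℝ) (hS₂def : S₂ = C * S₁⁻¹ * Cᵀ)
    (K MD T : Matrix ((Fin n ⊕ Fin m) ⊕ Fin p) ((Fin n ⊕ Fin m) ⊕ Fin p) ℝ)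
    (hK : K = fromBlocks (fromBlocks A Bᵀ B 0) (fromRows 0 Cᵀ) (fromCols 0 C) 0)
    (hMD : MD = fromBlocks (fromBlocks A 0 0 S₁) 0 0 hatS₂)
    (hT : T = MD⁻¹ * K)
    (lam : ℝ) (hlam : lam ^ 2 = lam + 1)
    (y : Fin m → ℝ) (hy : C *ᵥ y = 0) (hy0 : y ≠ 0)
    (x : Fin n → ℝ) (hx : x = (lam - 1)⁻¹ • ((A⁻¹ * Bᵀ) *ᵥ y)) :
    Module.End.HasEigenvector T.mulVecLin lam
      (Sum.elim (Sum.elim x y) (0 : Fin p → ℝ)) := by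
  have hS₁pd : S₁.PosDef := hS₁def ▸ aux_posdef_BABt A hA B hB
  have hlam1 : lam - 1 ≠ 0 := by
    intro h
    have : lam = 1 := by linarith
    rw [this] at hlam; norm_num at hlam
  have hAdet : IsUnit A.det := isUnit_iff_ne_zero.mpr hA.det_pos.ne'
  have hAAinv : A * A⁻¹ = 1 := Matrix.mul_nonsing_inv A hAdet
  set v : ((Fin n ⊕ Fin m) ⊕ Fin p) → ℝ := Sum.elim (Sum.elim x y) 0 with hv
  -- key block identities
  have hAx : A *ᵥ x = (lam - 1)⁻¹ • (Bᵀ *ᵥ y) := by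
    rw [hx, Matrix.mulVec_smul, Matrix.mulVec_mulVec, ← Matrix.mul_assoc, hAAinv,
      Matrix.one_mul]
  have eq1 : A *ᵥ x + Bᵀ *ᵥ y = lam • (A *ᵥ x) := by
    rw [hAx, smul_smul]
    have hsc : (lam - 1)⁻¹ + 1 = lam * (lam - 1)⁻¹ := by
      field_simp
      ring
    rw [← hsc, add_smul, one_smul]
  have eq2 : B *ᵥ x = lam • (S₁ *ᵥ y) := by
    have : lam = (lam - 1)⁻¹ := eq_inv_of_mul_eq_one_right (by nlinarith [hlam])
    rw [hx, Matrix.mulVec_smul, Matrix.mulVec_mulVec, ← Matrix.mul_assoc, ← hS₁def, ← this]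
  -- K v = MD (lam • v)
  have hKv : K *ᵥ v = MD *ᵥ (lam • v) := by
    rw [hK, hMD, Matrix.mulVec_smul]
    show (fromBlocks (fromBlocks A Bᵀ B 0) (fromRows 0 Cᵀ) (fromCols 0 C) 0) *ᵥ
        (Sum.elim (Sum.elim x y) 0) = lam • ((fromBlocks (fromBlocks A 0 0 S₁) 0 0 hatS₂) *ᵥ
        (Sum.elim (Sum.elim x y) 0))
    rw [Matrix.fromBlocks_mulVec, Matrix.fromBlocks_mulVec, Matrix.fromBlocks_mulVec]
    simp only [Matrix.mulVec_zero, Matrix.zero_mulVec, add_zero, zero_add,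
      Matrix.fromCols_mulVec_sumElim, hy]
    funext i
    rcases i with (i | i) | i
    · simpa [Sum.elim_comp_inl, Sum.elim_comp_inr, Matrix.fromBlocks_mulVec]
        using congrFun eq1 i
    · simpa [Sum.elim_comp_inl, Sum.elim_comp_inr, Matrix.fromBlocks_mulVec]
        using congrFun eq2 i
    · simp [Sum.elim_comp_inl, Sum.elim_comp_inr, hy]
  -- MD invertible
  have hMDdet : IsUnit MD.det := by
    rw [hMD, Matrix.det_fromBlocks_zero₁₂, Matrix.det_fromBlocks_zero₁₂]
    exact isUnit_iff_ne_zero.mpr (ne_of_gt (mul_pos (mul_pos hA.det_pos hS₁pd.det_pos) hhatS₂.det_pos))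
  have hMDinv : MD⁻¹ * MD = 1 := Matrix.nonsing_inv_mul MD hMDdet
  constructor
  · rw [Module.End.mem_eigenspace_iff, Matrix.mulVecLin_apply, hT, ← Matrix.mulVec_mulVec,
      hKv, Matrix.mulVec_mulVec, hMDinv, Matrix.one_mulVec]
  · intro h
    apply hy0
    ext i
    have := congrFun h (Sum.inl (Sum.inr i))
    simpa [hv] using this
end

section
/- (Theorem 2.1, part 2, multiplicity) Under the stated assumptions, each of the two golden-ratio values λ₊ = (1 + √5)/2 and λ₋ = (1 − √5)/2 is a root of the characteristic polynomial of T = M̂_D⁻¹ K of algebraic multiplicity exactly m − p. -/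
open Matrix Polynomial

lemma aux_eval_charpoly {ι : Type*} [Fintype ι] [DecidableEq ι]
    (M : Matrix ι ι ℝ) (x : ℝ) :
    M.charpoly.eval x = (x • (1 : Matrix ι ι ℝ) - M).det := by
  rw [Matrix.charpoly, ← Polynomial.coe_evalRingHom, RingHom.map_det]
  congr 1
  ext i j
  by_cases h : i = j
  · subst h
    simp [charmatrix_apply_eq, Matrix.one_apply_eq]
  · simp [charmatrix_apply_ne _ _ _ h, Matrix.one_apply_ne h]

lemma aux_inj_of_rank {m n : ℕ} (B : Matrix (Fin m) (Fin n) ℝ) (hB : B.rank = m) :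
    Function.Injective (Bᵀ.mulVec) := by
  have h1 : Bᵀ.rank = m := by rw [Matrix.rank_transpose]; exact hB
  have h3 : LinearMap.ker Bᵀ.mulVecLin = ⊥ := by
    have h0 := LinearMap.finrank_range_add_finrank_ker Bᵀ.mulVecLin
    rw [← Matrix.rank, h1, Module.finrank_pi] at h0
    simp at h0
    rw [Matrix.mulVecLin_transpose]
    exact h0
  have h4 := LinearMap.ker_eq_bot.mp h3
  intro v w hvw
  exact h4 (by simp only [Matrix.mulVecLin_apply]; exact hvw)

lemma aux_posDef_conj {n m : ℕ} {A : Matrix (Fin n) (Fin n) ℝ} (hA : A.PosDef)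
    {B : Matrix (Fin m) (Fin n) ℝ} (hB : Function.Injective Bᵀ.mulVec) :
    (B * A⁻¹ * Bᵀ).PosDef := by
  have hAi := hA.inv
  refine Matrix.PosDef.of_dotProduct_mulVec_pos ?_ (fun x hx => ?_)
  · have := (hAi.posSemidef.mul_mul_conjTranspose_same B).isHermitian
    simpa [Matrix.conjTranspose_eq_transpose_of_trivial] using this
  · have hy : Bᵀ *ᵥ x ≠ 0 := by
      intro h
      exact hx (hB (by simpa using h))
    have hpos := hAi.dotProduct_mulVec_pos hy
    simpa [Matrix.mulVec_mulVec, Matrix.dotProduct_mulVec, star_trivial, Matrix.mul_assoc,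
      ← Matrix.mulVec_transpose] using hpos

lemma aux_rm (c : ℝ) (hc : c ≠ 0) (k l : ℕ) (a b : ℝ) (hab : a ≠ b) (ha1 : a ≠ 1)
    (G : ℝ[X]) (hG : G.eval a ≠ 0) :
    rootMultiplicity a (C c * ((X - 1) ^ k * ((X - C a) * (X - C b)) ^ l * G)) = l := by
  have hGne : G ≠ 0 := fun h => hG (by simp [h])
  have hCc : (C c : ℝ[X]) ≠ 0 := by simpa using hc
  have hXa : (X - C a : ℝ[X]) ≠ 0 := X_sub_C_ne_zero a
  have hXb : (X - C b : ℝ[X]) ≠ 0 := X_sub_C_ne_zero b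
  have hX1 : ((X : ℝ[X]) - 1) ≠ 0 := by
    rw [← C_1]; exact X_sub_C_ne_zero 1
  have h2 : ((X - 1) ^ k * ((X - C a) * (X - C b)) ^ l * G) ≠ 0 :=
    mul_ne_zero (mul_ne_zero (pow_ne_zero _ hX1)
      (pow_ne_zero _ (mul_ne_zero hXa hXb))) hGne
  rw [rootMultiplicity_mul (mul_ne_zero hCc h2), rootMultiplicity_C,
    rootMultiplicity_mul h2,
    rootMultiplicity_mul (mul_ne_zero (pow_ne_zero _ hX1) (pow_ne_zero _ (mul_ne_zero hXa hXb)))]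
  have e1 : rootMultiplicity a ((X - 1 : ℝ[X]) ^ k) = 0 := by
    apply rootMultiplicity_eq_zero
    simp [IsRoot, sub_ne_zero.mpr ha1]
  have e3 : rootMultiplicity a G = 0 := rootMultiplicity_eq_zero hG
  have e2 : rootMultiplicity a (((X - C a) * (X - C b) : ℝ[X]) ^ l) = l := by
    rw [mul_pow, rootMultiplicity_mul (mul_ne_zero (pow_ne_zero _ hXa) (pow_ne_zero _ hXb)),
      rootMultiplicity_X_sub_C_pow]
    have : rootMultiplicity a ((X - C b : ℝ[X]) ^ l) = 0 := by
      apply rootMultiplicity_eq_zero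
      simp [IsRoot, sub_ne_zero.mpr hab]
    omega
  omega

lemma aux_eval_detPoly {p : ℕ} (S T : Matrix (Fin p) (Fin p) ℝ) (P Q : ℝ[X]) (x : ℝ) :
    (Matrix.det (P • S.map Polynomial.C - Q • T.map Polynomial.C)).eval x
      = ((P.eval x) • S - (Q.eval x) • T).det := by
  rw [← coe_evalRingHom, RingHom.map_det]
  congr 1
  ext i j
  simp [Matrix.map_apply, smul_eq_mul]

lemma aux_fromBlocks_sub {l m n o α : Type*} [AddGroup α]
    (A : Matrix n l α) (B : Matrix n m α) (C : Matrix o l α) (D : Matrix o m α)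
    (A' : Matrix n l α) (B' : Matrix n m α) (C' : Matrix o l α) (D' : Matrix o m α) :
    fromBlocks A B C D - fromBlocks A' B' C' D' =
      fromBlocks (A - A') (B - B') (C - C') (D - D') := by
  ext (i | i) (j | j) <;> simp

/-- Theorem 2.1, part 2, multiplicity: each of the golden-ratio values
`λ₊ = (1 + √5)/2` and `λ₋ = (1 − √5)/2` is a root of the characteristic polynomial of
`T = M̂_D⁻¹ K` of algebraic multiplicity exactly `m − p`. -/
theorem stmt_7 (n m p : ℕ) (hnm : m ≤ n) (hmp : p ≤ m)
    (A : Matrix (Fin n) (Fin n) ℝ) (hA : A.PosDef)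
    (B : Matrix (Fin m) (Fin n) ℝ) (hB : B.rank = m)
    (C : Matrix (Fin p) (Fin m) ℝ) (hC : C.rank = p)
    (hatS₂ : Matrix (Fin p) (Fin p) ℝ) (hhatS₂ : hatS₂.PosDef)
    (S₁ : Matrix (Fin m) (Fin m) ℝ) (hS₁def : S₁ = B * A⁻¹ * Bᵀ)
    (S₂ : Matrix (Fin p) (Fin p) ℝ) (hS₂def : S₂ = C * S₁⁻¹ * Cᵀ)
    (K MD T : Matrix ((Fin n ⊕ Fin m) ⊕ Fin p) ((Fin n ⊕ Fin m) ⊕ Fin p) ℝ)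
    (hK : K = fromBlocks (fromBlocks A Bᵀ B 0) (fromRows 0 Cᵀ) (fromCols 0 C) 0)
    (hMD : MD = fromBlocks (fromBlocks A 0 0 S₁) 0 0 hatS₂)
    (hT : T = MD⁻¹ * K) :
    T.charpoly.rootMultiplicity ((1 + Real.sqrt 5) / 2) = m - p ∧
      T.charpoly.rootMultiplicity ((1 - Real.sqrt 5) / 2) = m - p := by
  have hs : Real.sqrt 5 ^ 2 = 5 := Real.sq_sqrt (by norm_num)
  have hs1 : (1 : ℝ) < Real.sqrt 5 := by nlinarith [Real.sqrt_nonneg 5]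
  set φ := (1 + Real.sqrt 5) / 2 with hφdef
  set ψ := (1 - Real.sqrt 5) / 2 with hψdef
  have hφ1 : φ ≠ 1 := by rw [hφdef]; intro h; nlinarith
  have hψ1 : ψ ≠ 1 := by rw [hψdef]; intro h; nlinarith
  have hφψ : φ ≠ ψ := by rw [hφdef, hψdef]; intro h; nlinarith
  have hφroot : φ ^ 2 - φ - 1 = 0 := by
    have h : φ ^ 2 - φ - 1 = (Real.sqrt 5 ^ 2 - 5) / 4 := by rw [hφdef]; ring
    rw [h, hs]; norm_num
  have hψroot : ψ ^ 2 - ψ - 1 = 0 := by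
    have h : ψ ^ 2 - ψ - 1 = (Real.sqrt 5 ^ 2 - 5) / 4 := by rw [hψdef]; ring
    rw [h, hs]; norm_num
  have hsum : φ + ψ = 1 := by rw [hφdef, hψdef]; ring
  have hprod : φ * ψ = -1 := by
    have h : φ * ψ = (1 - Real.sqrt 5 ^ 2) / 4 := by rw [hφdef, hψdef]; ring
    rw [h, hs]; norm_num
  -- determinants and positive definiteness
  have hdA : A.det ≠ 0 := ne_of_gt hA.det_pos
  have hS₁pd : S₁.PosDef := by
    rw [hS₁def]; exact aux_posDef_conj hA (aux_inj_of_rank B hB)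
  have hS₂pd : S₂.PosDef := by
    rw [hS₂def]; exact aux_posDef_conj hS₁pd (aux_inj_of_rank C hC)
  have hdS₁ : S₁.det ≠ 0 := ne_of_gt hS₁pd.det_pos
  have hdS₂ : S₂.det ≠ 0 := ne_of_gt hS₂pd.det_pos
  have hdSh : hatS₂.det ≠ 0 := ne_of_gt hhatS₂.det_pos
  have hS₁u : IsUnit S₁.det := isUnit_iff_ne_zero.mpr hdS₁
  have hdMD : MD.det = A.det * S₁.det * hatS₂.det := by
    rw [hMD, Matrix.det_fromBlocks_zero₂₁, Matrix.det_fromBlocks_zero₂₁]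
  have hdMDne : MD.det ≠ 0 := by
    rw [hdMD]; exact mul_ne_zero (mul_ne_zero hdA hdS₁) hdSh
  have hMDu : IsUnit MD.det := isUnit_iff_ne_zero.mpr hdMDne
  -- the residual polynomial
  set G : ℝ[X] := Matrix.det ((X ^ 3 - X ^ 2 - X : ℝ[X]) • hatS₂.map Polynomial.C
    - ((X : ℝ[X]) - 1) • S₂.map Polynomial.C) with hGdef
  have hGeval : ∀ x : ℝ,
      G.eval x = ((x ^ 3 - x ^ 2 - x) • hatS₂ - (x - 1) • S₂).det := by
    intro x
    rw [hGdef, aux_eval_detPoly]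
    simp
  -- the key determinant identity
  have key : ∀ x : ℝ, x ≠ 0 → x - 1 ≠ 0 → x ^ 2 - x - 1 ≠ 0 →
      (x • MD - K).det = A.det * S₁.det *
        ((x - 1) ^ (n - m) * (x ^ 2 - x - 1) ^ (m - p) *
          ((x ^ 3 - x ^ 2 - x) • hatS₂ - (x - 1) • S₂).det) := by
    intro x hx0 hx1 hx2
    have hq : x - (x - 1)⁻¹ = (x ^ 2 - x - 1) * (x - 1)⁻¹ := by field_simp
    have hqne : x - (x - 1)⁻¹ ≠ 0 := by
      rw [hq]; exact mul_ne_zero hx2 (inv_ne_zero hx1)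
    have hr : x ^ 3 - x ^ 2 - x = x * (x ^ 2 - x - 1) := by ring
    have hrne : x ^ 3 - x ^ 2 - x ≠ 0 := by rw [hr]; exact mul_ne_zero hx0 hx2
    have hM : x • MD - K = fromBlocks
        (fromBlocks ((x - 1) • A) (-Bᵀ) (-B) (x • S₁))
        (fromRows 0 (-Cᵀ)) (fromCols 0 (-C)) (x • hatS₂) := by
      rw [hMD, hK]
      ext i j
      rcases i with (i | i) | i <;> rcases j with (j | j) | j <;>
        simp [Matrix.fromBlocks, Matrix.fromRows_apply_inl, Matrix.fromRows_apply_inr, Matrix.fromCols, Matrix.sub_apply,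
          Matrix.smul_apply, smul_eq_mul] <;> ring
    have hdet22 : (x • hatS₂).det ≠ 0 := by
      rw [Matrix.det_smul]
      simp only [Fintype.card_fin]
      exact mul_ne_zero (pow_ne_zero _ hx0) hdSh
    haveI i22 : Invertible (x • hatS₂) :=
      (x • hatS₂).invertibleOfIsUnitDet (isUnit_iff_ne_zero.mpr hdet22)
    have hdet11 : ((x - 1) • A).det ≠ 0 := by
      rw [Matrix.det_smul]
      simp only [Fintype.card_fin]
      exact mul_ne_zero (pow_ne_zero _ hx1) hdA
    haveI i11 : Invertible ((x - 1) • A) :=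
      ((x - 1) • A).invertibleOfIsUnitDet (isUnit_iff_ne_zero.mpr hdet11)
    have hinv22 : ⅟(x • hatS₂) = x⁻¹ • hatS₂⁻¹ := by
      rw [Matrix.invOf_eq_nonsing_inv]
      apply Matrix.inv_eq_right_inv
      rw [Matrix.smul_mul, Matrix.mul_smul, smul_smul, mul_inv_cancel₀ hx0, one_smul,
        Matrix.mul_nonsing_inv _ (isUnit_iff_ne_zero.mpr hdSh)]
    have hinv11 : ⅟((x - 1) • A) = (x - 1)⁻¹ • A⁻¹ := by
      rw [Matrix.invOf_eq_nonsing_inv]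
      apply Matrix.inv_eq_right_inv
      rw [Matrix.smul_mul, Matrix.mul_smul, smul_smul, mul_inv_cancel₀ hx1, one_smul,
        Matrix.mul_nonsing_inv _ (isUnit_iff_ne_zero.mpr hdA)]
    rw [hM, Matrix.det_fromBlocks₂₂, hinv22]
    have hE : fromRows (0 : Matrix (Fin n) (Fin p) ℝ) (-Cᵀ) * (x⁻¹ • hatS₂⁻¹)
          * fromCols (0 : Matrix (Fin p) (Fin n) ℝ) (-C)
        = fromBlocks (0 : Matrix (Fin n) (Fin n) ℝ) (0 : Matrix (Fin n) (Fin m) ℝ)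
            (0 : Matrix (Fin m) (Fin n) ℝ) (x⁻¹ • (Cᵀ * hatS₂⁻¹ * C)) := by
      rw [Matrix.fromRows_mul, Matrix.fromRows_mul_fromCols]
      congr 1 <;>
        simp [Matrix.mul_smul, Matrix.smul_mul, Matrix.mul_assoc]
    rw [hE, aux_fromBlocks_sub, sub_zero, sub_zero, sub_zero,
      Matrix.det_fromBlocks₁₁, hinv11]
    have hcor : (-B) * ((x - 1)⁻¹ • A⁻¹) * (-Bᵀ) = (x - 1)⁻¹ • S₁ := by
      rw [hS₁def]
      simp [Matrix.mul_smul, Matrix.smul_mul]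
    rw [hcor]
    have hMS : Cᵀ * (hatS₂⁻¹ * (C * S₁⁻¹)) * S₁ = Cᵀ * hatS₂⁻¹ * C := by
      simp [Matrix.mul_assoc, Matrix.nonsing_inv_mul _ hS₁u]
    have hfac : x • S₁ - x⁻¹ • (Cᵀ * hatS₂⁻¹ * C) - (x - 1)⁻¹ • S₁
        = ((x - (x - 1)⁻¹) • (1 : Matrix (Fin m) (Fin m) ℝ)
            - x⁻¹ • (Cᵀ * (hatS₂⁻¹ * (C * S₁⁻¹)))) * S₁ := by
      rw [Matrix.sub_mul, Matrix.smul_mul, Matrix.one_mul, sub_smul, Matrix.smul_mul, hMS]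
      exact sub_right_comm _ _ _
    rw [hfac, det_mul]
    have hUV : (x - (x - 1)⁻¹) • (1 : Matrix (Fin m) (Fin m) ℝ)
          - x⁻¹ • (Cᵀ * (hatS₂⁻¹ * (C * S₁⁻¹)))
        = (x - (x - 1)⁻¹) • ((1 : Matrix (Fin m) (Fin m) ℝ)
            - ((x - (x - 1)⁻¹)⁻¹ • Cᵀ) * (x⁻¹ • (hatS₂⁻¹ * (C * S₁⁻¹)))) := by
      rw [smul_sub]
      congr 1
      rw [Matrix.smul_mul, Matrix.mul_smul, smul_smul, smul_smul,
        mul_inv_cancel₀ hqne, one_mul]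
    rw [hUV, Matrix.det_smul _ (x - (x - 1)⁻¹), Matrix.det_one_sub_mul_comm]
    have hVU : (x⁻¹ • (hatS₂⁻¹ * (C * S₁⁻¹))) * ((x - (x - 1)⁻¹)⁻¹ • Cᵀ)
        = (x⁻¹ * (x - (x - 1)⁻¹)⁻¹) • (hatS₂⁻¹ * S₂) := by
      rw [hS₂def, Matrix.smul_mul, Matrix.mul_smul, smul_smul]
      congr 1
      rw [Matrix.mul_assoc]
    rw [hVU]
    have h1sub : (1 : Matrix (Fin p) (Fin p) ℝ)
          - (x⁻¹ * (x - (x - 1)⁻¹)⁻¹) • (hatS₂⁻¹ * S₂)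
        = hatS₂⁻¹ * (hatS₂ - (x⁻¹ * (x - (x - 1)⁻¹)⁻¹) • S₂) := by
      rw [Matrix.mul_sub, Matrix.mul_smul,
        Matrix.nonsing_inv_mul _ (isUnit_iff_ne_zero.mpr hdSh)]
    rw [h1sub, det_mul]
    have hscal : x⁻¹ * (x - (x - 1)⁻¹)⁻¹ = (x ^ 3 - x ^ 2 - x)⁻¹ * (x - 1) := by
      rw [hq, hr]
      field_simp
      try ring
    have hfinal : hatS₂ - (x⁻¹ * (x - (x - 1)⁻¹)⁻¹) • S₂
        = (x ^ 3 - x ^ 2 - x)⁻¹ • ((x ^ 3 - x ^ 2 - x) • hatS₂ - (x - 1) • S₂) := by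
      rw [hscal, smul_sub, smul_smul, smul_smul, inv_mul_cancel₀ hrne, one_smul]
    rw [hfinal, Matrix.det_smul _ ((x ^ 3 - x ^ 2 - x)⁻¹), Matrix.det_smul hatS₂ x,
      Matrix.det_smul A (x - 1), Matrix.det_nonsing_inv, Ring.inverse_eq_inv']
    simp only [Fintype.card_fin]
    set g := ((x ^ 3 - x ^ 2 - x) • hatS₂ - (x - 1) • S₂).det with hg
    rw [hq]
    have e1 : (x - 1 : ℝ) ^ n = (x - 1) ^ (n - m) * (x - 1) ^ m := by
      rw [← pow_add, Nat.sub_add_cancel hnm]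
    have e2 : (x ^ 2 - x - 1 : ℝ) ^ m = (x ^ 2 - x - 1) ^ (m - p) * (x ^ 2 - x - 1) ^ p := by
      rw [← pow_add, Nat.sub_add_cancel hmp]
    have e3 : ((x ^ 3 - x ^ 2 - x : ℝ)⁻¹) ^ p = (x⁻¹) ^ p * ((x ^ 2 - x - 1)⁻¹) ^ p := by
      rw [hr, mul_inv, mul_pow]
    have c1 : (x : ℝ) ^ p * (x⁻¹) ^ p = 1 := by
      rw [← mul_pow, mul_inv_cancel₀ hx0, one_pow]
    have c2 : (x - 1 : ℝ) ^ m * ((x - 1)⁻¹) ^ m = 1 := by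
      rw [← mul_pow, mul_inv_cancel₀ hx1, one_pow]
    have c3 : (x ^ 2 - x - 1 : ℝ) ^ p * ((x ^ 2 - x - 1)⁻¹) ^ p = 1 := by
      rw [← mul_pow, mul_inv_cancel₀ hx2, one_pow]
    have c4 : hatS₂.det * hatS₂.det⁻¹ = 1 := mul_inv_cancel₀ hdSh
    calc x ^ p * hatS₂.det * ((x - 1) ^ n * A.det *
            (((x ^ 2 - x - 1) * (x - 1)⁻¹) ^ m *
              (hatS₂.det⁻¹ * (((x ^ 3 - x ^ 2 - x)⁻¹) ^ p * g)) * S₁.det))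
        = (x ^ p * (x⁻¹) ^ p) * ((x - 1) ^ m * ((x - 1)⁻¹) ^ m)
            * ((x ^ 2 - x - 1) ^ p * ((x ^ 2 - x - 1)⁻¹) ^ p) * (hatS₂.det * hatS₂.det⁻¹)
            * (A.det * S₁.det * ((x - 1) ^ (n - m) * (x ^ 2 - x - 1) ^ (m - p) * g)) := by
          rw [mul_pow, e1, e2, e3]; ring
      _ = A.det * S₁.det * ((x - 1) ^ (n - m) * (x ^ 2 - x - 1) ^ (m - p) * g) := by
          rw [c1, c2, c3, c4]; ring
  -- the characteristic polynomial factorization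
  have hchar : T.charpoly = Polynomial.C (MD.det⁻¹ * (A.det * S₁.det)) *
      ((X - 1) ^ (n - m) * (X ^ 2 - X - 1) ^ (m - p) * G) := by
    apply eq_of_infinite_eval_eq
    refine Set.Infinite.mono (fun x hx => ?_) (Set.Ioi_infinite (2 : ℝ))
    have hx' : (2 : ℝ) < x := hx
    simp only [Set.mem_setOf_eq]
    have hx0 : x ≠ 0 := by intro h; rw [h] at hx'; norm_num at hx'
    have hx1 : x - 1 ≠ 0 := by intro h; nlinarith
    have hx2 : x ^ 2 - x - 1 ≠ 0 := by intro h; nlinarith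
    rw [aux_eval_charpoly]
    have hTx : x • (1 : Matrix ((Fin n ⊕ Fin m) ⊕ Fin p) ((Fin n ⊕ Fin m) ⊕ Fin p) ℝ) - T
        = MD⁻¹ * (x • MD - K) := by
      rw [hT, Matrix.mul_sub, Matrix.mul_smul, Matrix.nonsing_inv_mul MD hMDu]
    rw [hTx, det_mul, Matrix.det_nonsing_inv, Ring.inverse_eq_inv', key x hx0 hx1 hx2]
    simp only [eval_mul, eval_pow, eval_sub, eval_one, eval_X, eval_C]
    rw [hGeval x]
    ring
  -- the quadratic factor
  have hfactor : (X ^ 2 - X - 1 : ℝ[X]) = (X - Polynomial.C φ) * (X - Polynomial.C ψ) := by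
    have h1 : (Polynomial.C φ + Polynomial.C ψ : ℝ[X]) = 1 := by
      rw [← Polynomial.C_add, hsum, Polynomial.C_1]
    have h2 : (Polynomial.C φ * Polynomial.C ψ : ℝ[X]) = -1 := by
      rw [← Polynomial.C_mul, hprod, map_neg, Polynomial.C_1]
    have h3 : (X - Polynomial.C φ) * (X - Polynomial.C ψ)
        = X ^ 2 - (Polynomial.C φ + Polynomial.C ψ) * X + Polynomial.C φ * Polynomial.C ψ := by
      ring
    rw [h3, h1, h2]
    ring
  have hc : MD.det⁻¹ * (A.det * S₁.det) ≠ 0 :=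
    mul_ne_zero (inv_ne_zero hdMDne) (mul_ne_zero hdA hdS₁)
  have hGφ : G.eval φ ≠ 0 := by
    rw [hGeval]
    have h0 : φ ^ 3 - φ ^ 2 - φ = 0 := by
      have : φ ^ 3 - φ ^ 2 - φ = φ * (φ ^ 2 - φ - 1) := by ring
      rw [this, hφroot, mul_zero]
    rw [h0, zero_smul, zero_sub, ← neg_smul, Matrix.det_smul]
    simp only [Fintype.card_fin]
    exact mul_ne_zero (pow_ne_zero _ (neg_ne_zero.mpr (sub_ne_zero.mpr hφ1))) hdS₂
  have hGψ : G.eval ψ ≠ 0 := by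
    rw [hGeval]
    have h0 : ψ ^ 3 - ψ ^ 2 - ψ = 0 := by
      have : ψ ^ 3 - ψ ^ 2 - ψ = ψ * (ψ ^ 2 - ψ - 1) := by ring
      rw [this, hψroot, mul_zero]
    rw [h0, zero_smul, zero_sub, ← neg_smul, Matrix.det_smul]
    simp only [Fintype.card_fin]
    exact mul_ne_zero (pow_ne_zero _ (neg_ne_zero.mpr (sub_ne_zero.mpr hψ1))) hdS₂
  constructor
  · rw [hchar, hfactor]
    exact aux_rm _ hc _ _ φ ψ hφψ hφ1 G hGφ
  · rw [hchar, hfactor, mul_comm (X - Polynomial.C φ) (X - Polynomial.C ψ)]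
    exact aux_rm _ hc _ _ ψ φ (Ne.symm hφψ) hψ1 G hGψ
end

section
/- (Theorem 2.1, part 3) Under the stated assumptions, suppose λ ∈ ℝ is an eigenvalue of T = M̂_D⁻¹ K with eigenvector (x, y, z), and suppose λ ≠ 1 and λ² ≠ λ + 1. Then z ≠ 0 and S₂ z = μ Ŝ₂ z, where μ = λ(λ² − λ − 1)/(λ − 1); equivalently, λ is a root of the cubic λ³ − λ² − (1 + μ)λ + μ = 0 for some generalized eigenvalue μ of the pencil (S₂, Ŝ₂). -/
open Matrix

/-- Theorem 2.1, part 3: suppose `λ` is an eigenvalue of `T = M̂_D⁻¹ K`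
with eigenvector `(x, y, z)`, and suppose `λ ≠ 1` and `λ² ≠ λ + 1`. Then `z ≠ 0` and
`S₂ z = μ Ŝ₂ z` where `μ = λ(λ² − λ − 1)/(λ − 1)`; equivalently, `λ` is a root of the
cubic `λ³ − λ² − (1 + μ)λ + μ = 0` for a generalized eigenvalue `μ` of the pencil
`(S₂, Ŝ₂)`. -/
theorem stmt_8 (n m p : ℕ) (hnm : m ≤ n) (hmp : p ≤ m)
    (A : Matrix (Fin n) (Fin n) ℝ) (hA : A.PosDef)
    (B : Matrix (Fin m) (Fin n) ℝ) (hB : B.rank = m)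
    (C : Matrix (Fin p) (Fin m) ℝ) (hC : C.rank = p)
    (hatS₂ : Matrix (Fin p) (Fin p) ℝ) (hhatS₂ : hatS₂.PosDef)
    (S₁ : Matrix (Fin m) (Fin m) ℝ) (hS₁def : S₁ = B * A⁻¹ * Bᵀ)
    (S₂ : Matrix (Fin p) (Fin p) ℝ) (hS₂def : S₂ = C * S₁⁻¹ * Cᵀ)
    (K MD T : Matrix ((Fin n ⊕ Fin m) ⊕ Fin p) ((Fin n ⊕ Fin m) ⊕ Fin p) ℝ)
    (hK : K = fromBlocks (fromBlocks A Bᵀ B 0) (fromRows 0 Cᵀ) (fromCols 0 C) 0)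
    (hMD : MD = fromBlocks (fromBlocks A 0 0 S₁) 0 0 hatS₂)
    (hT : T = MD⁻¹ * K)
    (lam : ℝ) (hlam1 : lam ≠ 1) (hlam2 : lam ^ 2 ≠ lam + 1)
    (x : Fin n → ℝ) (y : Fin m → ℝ) (z : Fin p → ℝ)
    (hv0 : Sum.elim (Sum.elim x y) z ≠ 0)
    (heig : T *ᵥ Sum.elim (Sum.elim x y) z = lam • Sum.elim (Sum.elim x y) z) :
    z ≠ 0 ∧
      S₂ *ᵥ z = (lam * (lam ^ 2 - lam - 1) / (lam - 1)) • (hatS₂ *ᵥ z) ∧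
      lam ^ 3 - lam ^ 2 - (1 + lam * (lam ^ 2 - lam - 1) / (lam - 1)) * lam +
          lam * (lam ^ 2 - lam - 1) / (lam - 1) = 0 := by
  have ht : lam - 1 ≠ 0 := sub_ne_zero.mpr hlam1
  have hq : lam ^ 2 - lam - 1 ≠ 0 := fun h => hlam2 (by linarith)
  -- Bᵀ and Cᵀ have injective mulVec
  have hBli : LinearIndependent ℝ (fun i => B i) := by
    apply linearIndependent_iff_card_eq_finrank_span.mpr
    rw [Set.finrank]; change _ = Module.finrank ℝ (Submodule.span ℝ (Set.range B.row)); rw [← rank_eq_finrank_span_row, hB, Fintype.card_fin]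
  have hBt : Function.Injective Bᵀ.mulVec := by
    rw [Matrix.mulVec_injective_iff]
    exact hBli
  have hCli : LinearIndependent ℝ (fun i => C i) := by
    apply linearIndependent_iff_card_eq_finrank_span.mpr
    rw [Set.finrank]; change _ = Module.finrank ℝ (Submodule.span ℝ (Set.range C.row)); rw [← rank_eq_finrank_span_row, hC, Fintype.card_fin]
  have hCt : Function.Injective Cᵀ.mulVec := by
    rw [Matrix.mulVec_injective_iff]
    exact hCli
  -- S₁ is positive definite
  have hAdet : IsUnit A.det := (Matrix.isUnit_iff_isUnit_det A).mp hA.isUnit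
  have hS₁ : S₁.PosDef := by
    rw [hS₁def]
    refine posDef_iff_dotProduct_mulVec.mpr ⟨?_, ?_⟩
    · have h := (hA.inv.posSemidef.mul_mul_conjTranspose_same B).isHermitian
      rwa [conjTranspose_eq_transpose_of_trivial] at h
    · intro v hv
      have hw : Bᵀ *ᵥ v ≠ 0 := fun h => hv (hBt (by simpa using h))
      have h2 := hA.inv.dotProduct_mulVec_pos hw
      have key : (B * A⁻¹ * Bᵀ) *ᵥ v = B *ᵥ (A⁻¹ *ᵥ (Bᵀ *ᵥ v)) := by
        rw [mulVec_mulVec, mulVec_mulVec]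
      rw [star_trivial] at h2 ⊢
      rwa [key, dotProduct_mulVec, ← mulVec_transpose]
  have hS₁det : IsUnit S₁.det := (Matrix.isUnit_iff_isUnit_det S₁).mp hS₁.isUnit
  -- the eigen equation in the form K v = lam • (MD v)
  have hMDdet : IsUnit MD.det := by
    rw [hMD, det_fromBlocks_zero₂₁, det_fromBlocks_zero₂₁]
    exact (mul_pos (mul_pos hA.det_pos hS₁.det_pos) hhatS₂.det_pos).ne'.isUnit
  set v : ((Fin n ⊕ Fin m) ⊕ Fin p) → ℝ := Sum.elim (Sum.elim x y) z with hv
  have hKv : K *ᵥ v = lam • (MD *ᵥ v) := by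
    have h1 : MD * T = K := by
      rw [hT, ← Matrix.mul_assoc, Matrix.mul_nonsing_inv _ hMDdet, Matrix.one_mul]
    calc K *ᵥ v = MD *ᵥ (T *ᵥ v) := by rw [mulVec_mulVec, h1]
    _ = MD *ᵥ (lam • v) := by rw [heig]
    _ = lam • (MD *ᵥ v) := mulVec_smul _ _ _
  have hKv' : Sum.elim (Sum.elim (A *ᵥ x + Bᵀ *ᵥ y) (B *ᵥ x + Cᵀ *ᵥ z)) (C *ᵥ y)
      = lam • Sum.elim (Sum.elim (A *ᵥ x) (S₁ *ᵥ y)) (hatS₂ *ᵥ z) := by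
    have hl : K *ᵥ v = Sum.elim (Sum.elim (A *ᵥ x + Bᵀ *ᵥ y) (B *ᵥ x + Cᵀ *ᵥ z)) (C *ᵥ y) := by
      funext i
      rcases i with (i | i) | i <;>
        simp [hK, hv, fromBlocks_mulVec, fromRows_mulVec, fromCols_mulVec_sumElim]
    have hr : MD *ᵥ v = Sum.elim (Sum.elim (A *ᵥ x) (S₁ *ᵥ y)) (hatS₂ *ᵥ z) := by
      funext i
      rcases i with (i | i) | i <;>
        simp [hMD, hv, fromBlocks_mulVec]
    rw [← hl, ← hr]; exact hKv
  have e1 : A *ᵥ x + Bᵀ *ᵥ y = lam • (A *ᵥ x) := by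
    funext i; simpa using congrFun hKv' (Sum.inl (Sum.inl i))
  have e2 : B *ᵥ x + Cᵀ *ᵥ z = lam • (S₁ *ᵥ y) := by
    funext i; simpa using congrFun hKv' (Sum.inl (Sum.inr i))
  have e3 : C *ᵥ y = lam • (hatS₂ *ᵥ z) := by
    funext i; simpa using congrFun hKv' (Sum.inr i)
  -- derive block relations
  have eBy : Bᵀ *ᵥ y = (lam - 1) • (A *ᵥ x) := by
    have h := eq_sub_of_add_eq' e1
    rw [h, sub_smul, one_smul]
  have hAx : A *ᵥ x = (lam - 1)⁻¹ • (Bᵀ *ᵥ y) := by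
    rw [eBy, smul_smul, inv_mul_cancel₀ ht, one_smul]
  have hxid : A⁻¹ *ᵥ (A *ᵥ x) = x := by
    rw [mulVec_mulVec, Matrix.nonsing_inv_mul _ hAdet, one_mulVec]
  have hBx : B *ᵥ x = (lam - 1)⁻¹ • (S₁ *ᵥ y) := by
    calc B *ᵥ x = B *ᵥ (A⁻¹ *ᵥ (A *ᵥ x)) := by rw [hxid]
    _ = B *ᵥ (A⁻¹ *ᵥ ((lam - 1)⁻¹ • (Bᵀ *ᵥ y))) := by rw [hAx]
    _ = (lam - 1)⁻¹ • (B * A⁻¹ * Bᵀ) *ᵥ y := by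
        rw [mulVec_smul, mulVec_smul, mulVec_mulVec, mulVec_mulVec]
    _ = (lam - 1)⁻¹ • (S₁ *ᵥ y) := by rw [← hS₁def]
  set c : ℝ := lam - (lam - 1)⁻¹ with hcdef
  have hcval : c = (lam ^ 2 - lam - 1) / (lam - 1) := by
    rw [hcdef]; field_simp
  have hc : c ≠ 0 := by rw [hcval]; exact div_ne_zero hq ht
  have eCz : Cᵀ *ᵥ z = c • (S₁ *ᵥ y) := by
    have h := eq_sub_of_add_eq e2
    rw [hBx] at h
    rw [hcdef, sub_smul, h]
    abel
  have hS1y : S₁ *ᵥ y = c⁻¹ • (Cᵀ *ᵥ z) := by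
    rw [eCz, smul_smul, inv_mul_cancel₀ hc, one_smul]
  have hyid : S₁⁻¹ *ᵥ (S₁ *ᵥ y) = y := by
    rw [mulVec_mulVec, Matrix.nonsing_inv_mul _ hS₁det, one_mulVec]
  have hCy : C *ᵥ y = c⁻¹ • (S₂ *ᵥ z) := by
    calc C *ᵥ y = C *ᵥ (S₁⁻¹ *ᵥ (S₁ *ᵥ y)) := by rw [hyid]
    _ = C *ᵥ (S₁⁻¹ *ᵥ (c⁻¹ • (Cᵀ *ᵥ z))) := by rw [hS1y]
    _ = c⁻¹ • (C * S₁⁻¹ * Cᵀ) *ᵥ z := by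
        rw [mulVec_smul, mulVec_smul, mulVec_mulVec, mulVec_mulVec]
    _ = c⁻¹ • (S₂ *ᵥ z) := by rw [← hS₂def]
  -- z ≠ 0
  have hz : z ≠ 0 := by
    intro hz0
    have hy0 : y = 0 := by
      have : S₁ *ᵥ y = 0 := by
        rw [hS1y, hz0, mulVec_zero, smul_zero]
      rw [← hyid, this, mulVec_zero]
    have hx0 : x = 0 := by
      have : A *ᵥ x = 0 := by
        rw [hAx, hy0, mulVec_zero, smul_zero]
      rw [← hxid, this, mulVec_zero]
    apply hv0
    funext i
    rcases i with (i | i) | i <;> simp [hv, hx0, hy0, hz0]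
  refine ⟨hz, ?_, ?_⟩
  · have h := e3
    rw [hCy] at h
    have h2 : S₂ *ᵥ z = c • (lam • (hatS₂ *ᵥ z)) := by
      rw [← h, smul_smul, mul_inv_cancel₀ hc, one_smul]
    rw [h2, smul_smul]
    congr 1
    rw [hcval]; field_simp
  · field_simp
    ring
end

section
/- Let I ⊆ ℝ be an open interval and let λ : I → ℝ be differentiable with λ(μ)³ − λ(μ)² − (1 + μ)λ(μ) + μ = 0 for all μ ∈ I, and λ(μ) ≠ 1 on I. Then at any μ₀ ∈ I: if λ(μ₀) > 0 then λ'(μ₀) > 0, and if λ(μ₀) < −1 then λ'(μ₀) < 0; that is, positive root branches are increasing in μ and root branches below −1 are decreasing in μ. -/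
open Set

/-- let `I = (a, b)` be an open interval and `λ : I → ℝ` a differentiable
branch of roots of `λ³ − λ² − (1 + μ)λ + μ = 0` with `λ(μ) ≠ 1` on `I`. Then at any
`μ₀ ∈ I`: if `λ(μ₀) > 0` then `λ'(μ₀) > 0`, and if `λ(μ₀) < −1` then `λ'(μ₀) < 0`. -/
theorem stmt_11 (a b : ℝ) (f : ℝ → ℝ)
    (hdiff : ∀ μ ∈ Set.Ioo a b, DifferentiableAt ℝ f μ)
    (hroot : ∀ μ ∈ Set.Ioo a b, (f μ) ^ 3 - (f μ) ^ 2 - (1 + μ) * f μ + μ = 0)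
    (hne : ∀ μ ∈ Set.Ioo a b, f μ ≠ 1)
    (μ₀ : ℝ) (hμ₀ : μ₀ ∈ Set.Ioo a b) :
    (0 < f μ₀ → 0 < deriv f μ₀) ∧ (f μ₀ < -1 → deriv f μ₀ < 0) := by
  set x := f μ₀ with hx
  set c := deriv f μ₀ with hc
  have hf : HasDerivAt f c μ₀ := (hdiff μ₀ hμ₀).hasDerivAt
  have hid : HasDerivAt (fun μ => (f μ) ^ 3 - (f μ) ^ 2 - (1 + μ) * f μ + μ)
      ((3 * x ^ 2 * c) - (2 * x * c) - ((0 + 1) * x + (1 + μ₀) * c) + 1) μ₀ := by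
    have h1 : HasDerivAt (fun μ => (f μ) ^ 3) (3 * x ^ 2 * c) μ₀ := by
      have := hf.fun_pow 3
      simpa [hx, mul_comm, mul_assoc, mul_left_comm] using this
    have h2 : HasDerivAt (fun μ => (f μ) ^ 2) (2 * x * c) μ₀ := by
      have := hf.fun_pow 2
      simpa [hx, mul_comm, mul_assoc, mul_left_comm] using this
    have h3 : HasDerivAt (fun μ : ℝ => (1 + μ)) (0 + 1) μ₀ :=
      (hasDerivAt_const μ₀ (1:ℝ)).add (hasDerivAt_id μ₀)
    have h4 : HasDerivAt (fun μ => (1 + μ) * f μ) ((0 + 1) * x + (1 + μ₀) * c) μ₀ :=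
      h3.mul hf
    exact ((h1.sub h2).sub h4).add (hasDerivAt_id μ₀)
  have hzero : HasDerivAt (fun μ => (f μ) ^ 3 - (f μ) ^ 2 - (1 + μ) * f μ + μ) 0 μ₀ := by
    have hev : (fun μ => (f μ) ^ 3 - (f μ) ^ 2 - (1 + μ) * f μ + μ) =ᶠ[nhds μ₀]
        (fun _ => (0:ℝ)) := by
      filter_upwards [isOpen_Ioo.mem_nhds hμ₀] with μ hμ
      exact hroot μ hμ
    exact (hasDerivAt_const μ₀ (0:ℝ)).congr_of_eventuallyEq hev
  have hE : (3 * x ^ 2 * c) - (2 * x * c) - ((0 + 1) * x + (1 + μ₀) * c) + 1 = 0 :=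
    hid.unique hzero
  have hR : x ^ 3 - x ^ 2 - (1 + μ₀) * x + μ₀ = 0 := hroot μ₀ hμ₀
  have hne1 : x ≠ 1 := hne μ₀ hμ₀
  -- key identity: (2x³ - 4x² + 2x + 1) * c = (x - 1)²
  have hkey : (2 * x ^ 3 - 4 * x ^ 2 + 2 * x + 1) * c = (x - 1) ^ 2 := by
    have h1 : (3 * x ^ 2 - 2 * x - 1 - μ₀) * c = x - 1 := by nlinarith [hE]
    have h2 : μ₀ * (x - 1) = x ^ 3 - x ^ 2 - x := by nlinarith [hR]
    linear_combination (x - 1) * h1 + c * h2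
  have hsq : (0:ℝ) < (x - 1) ^ 2 := by
    have : x - 1 ≠ 0 := sub_ne_zero.mpr hne1
    positivity
  constructor
  · intro hxpos
    nlinarith [hkey, hsq, sq_nonneg (x - 1), mul_pos hxpos hsq]
  · intro hxneg
    nlinarith [hkey, hsq, sq_nonneg (x - 1), mul_pos (by linarith : (0:ℝ) < -1 - x) hsq]
end

section
/- For every real μ > 0 the cubic polynomial p_μ(λ) = λ³ − λ² − (1 + μ)λ + μ has three distinct real roots λ₃ < λ₂ < λ₁ with λ₃ < 0, 0 < λ₂ < 1, and λ₁ > 1. Moreover, if μ ≥ 1 then λ₃ ≤ 2cos(5π/7), 2cos(3π/7) ≤ λ₂ < 1, and λ₁ ≥ 2cos(π/7). -/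
open Real

private lemma cubic_of_cos (x : ℝ) (h : Real.cos (4 * x) = -Real.cos (3 * x))
    (h2 : Real.cos x ≠ -1) :
    8 * (Real.cos x) ^ 3 - 4 * (Real.cos x) ^ 2 - 4 * Real.cos x + 1 = 0 := by
  have h3 : Real.cos (3 * x) = 4 * (Real.cos x) ^ 3 - 3 * Real.cos x := Real.cos_three_mul x
  have h4 : Real.cos (4 * x) = 2 * (Real.cos (2 * x)) ^ 2 - 1 := by
    rw [show (4 : ℝ) * x = 2 * (2 * x) by ring, Real.cos_two_mul]
  have h2m : Real.cos (2 * x) = 2 * (Real.cos x) ^ 2 - 1 := Real.cos_two_mul x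
  rw [h2m] at h4
  have hne : Real.cos x + 1 ≠ 0 := fun hh => h2 (by linarith)
  have hkey : (Real.cos x + 1) *
      (8 * (Real.cos x) ^ 3 - 4 * (Real.cos x) ^ 2 - 4 * Real.cos x + 1) = 0 := by
    rw [h3, h4] at h
    linear_combination h
  exact (mul_eq_zero.mp hkey).resolve_left hne

private lemma cos_ne_neg_one_of_mem (x : ℝ) (h0 : 0 ≤ x) (h1 : x < π) : Real.cos x ≠ -1 := by
  have := Real.cos_lt_cos_of_nonneg_of_le_pi h0 le_rfl h1
  rw [Real.cos_pi] at this
  linarith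

private lemma cubic_pi_div_seven :
    8 * (Real.cos (π / 7)) ^ 3 - 4 * (Real.cos (π / 7)) ^ 2 - 4 * Real.cos (π / 7) + 1 = 0 := by
  have hπ := Real.pi_pos
  apply cubic_of_cos
  · rw [show 4 * (π / 7) = π - 3 * (π / 7) by ring, Real.cos_pi_sub]
  · exact cos_ne_neg_one_of_mem _ (by positivity) (by linarith)

private lemma cubic_three_pi_div_seven :
    8 * (Real.cos (3 * π / 7)) ^ 3 - 4 * (Real.cos (3 * π / 7)) ^ 2
      - 4 * Real.cos (3 * π / 7) + 1 = 0 := by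
  have hπ := Real.pi_pos
  apply cubic_of_cos
  · rw [show 4 * (3 * π / 7) = (π - 3 * (3 * π / 7)) + 2 * π by ring, Real.cos_add_two_pi,
      Real.cos_pi_sub]
  · exact cos_ne_neg_one_of_mem _ (by positivity) (by linarith)

private lemma cubic_five_pi_div_seven :
    8 * (Real.cos (5 * π / 7)) ^ 3 - 4 * (Real.cos (5 * π / 7)) ^ 2
      - 4 * Real.cos (5 * π / 7) + 1 = 0 := by
  have hπ := Real.pi_pos
  apply cubic_of_cos
  · rw [show 4 * (5 * π / 7) = ((π - 3 * (5 * π / 7)) + 2 * π) + 2 * π by ring,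
      Real.cos_add_two_pi, Real.cos_add_two_pi, Real.cos_pi_sub]
  · exact cos_ne_neg_one_of_mem _ (by positivity) (by linarith)

/-- for every `μ > 0` the cubic `p_μ(λ) = λ³ − λ² − (1 + μ)λ + μ` has
three distinct real roots `λ₃ < λ₂ < λ₁` with `λ₃ < 0`, `0 < λ₂ < 1`, `λ₁ > 1`.
Moreover, if `μ ≥ 1` then `λ₃ ≤ 2cos(5π/7)`, `2cos(3π/7) ≤ λ₂ < 1`, and
`λ₁ ≥ 2cos(π/7)`. -/
theorem stmt_12 (μ : ℝ) (hμ : 0 < μ) :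
    ∃ l₁ l₂ l₃ : ℝ,
      l₃ < l₂ ∧ l₂ < l₁ ∧
      l₁ ^ 3 - l₁ ^ 2 - (1 + μ) * l₁ + μ = 0 ∧
      l₂ ^ 3 - l₂ ^ 2 - (1 + μ) * l₂ + μ = 0 ∧
      l₃ ^ 3 - l₃ ^ 2 - (1 + μ) * l₃ + μ = 0 ∧
      (∀ r : ℝ, r ^ 3 - r ^ 2 - (1 + μ) * r + μ = 0 → r = l₁ ∨ r = l₂ ∨ r = l₃) ∧
      l₃ < 0 ∧ 0 < l₂ ∧ l₂ < 1 ∧ 1 < l₁ ∧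
      (1 ≤ μ →
        l₃ ≤ 2 * Real.cos (5 * π / 7) ∧
        2 * Real.cos (3 * π / 7) ≤ l₂ ∧
        2 * Real.cos (π / 7) ≤ l₁) := by
  set f : ℝ → ℝ := fun x => x ^ 3 - x ^ 2 - (1 + μ) * x + μ with hf
  have hcont : Continuous f := by
    simp only [hf]; continuity
  have hf0 : f 0 = μ := by simp [hf]
  have hf1 : f 1 = -1 := by simp only [hf]; ring
  have hfm : f (-(μ + 2)) < 0 := by simp only [hf]; nlinarith
  have hfM : 0 < f (μ + 2) := by simp only [hf]; nlinarith
  -- three roots via IVT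
  have m3 : (0 : ℝ) ∈ Set.Icc (f (-(μ + 2))) (f 0) := ⟨le_of_lt hfm, by rw [hf0]; linarith⟩
  obtain ⟨l₃, hl₃mem, hl₃⟩ := intermediate_value_Icc (by linarith : -(μ + 2) ≤ (0 : ℝ))
    hcont.continuousOn m3
  have m2 : (0 : ℝ) ∈ Set.Icc (f 1) (f 0) := ⟨by rw [hf1]; linarith, by rw [hf0]; linarith⟩
  obtain ⟨l₂, hl₂mem, hl₂⟩ := intermediate_value_Icc' (by norm_num : (0 : ℝ) ≤ 1)
    hcont.continuousOn m2
  have m1 : (0 : ℝ) ∈ Set.Icc (f 1) (f (μ + 2)) := ⟨by rw [hf1]; linarith, le_of_lt hfM⟩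
  obtain ⟨l₁, hl₁mem, hl₁⟩ := intermediate_value_Icc (by linarith : (1 : ℝ) ≤ μ + 2)
    hcont.continuousOn m1
  have hl₃0 : l₃ < 0 := by
    rcases lt_or_eq_of_le hl₃mem.2 with h | h
    · exact h
    · rw [h, hf0] at hl₃; linarith
  have hl₂0 : 0 < l₂ := by
    rcases lt_or_eq_of_le hl₂mem.1 with h | h
    · exact h
    · rw [← h, hf0] at hl₂; linarith
  have hl₂1 : l₂ < 1 := by
    rcases lt_or_eq_of_le hl₂mem.2 with h | h
    · exact h
    · rw [h, hf1] at hl₂; linarith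
  have hl₁1 : 1 < l₁ := by
    rcases lt_or_eq_of_le hl₁mem.1 with h | h
    · exact h
    · rw [← h, hf1] at hl₁; linarith
  have h32 : l₃ < l₂ := lt_trans hl₃0 hl₂0
  have h21 : l₂ < l₁ := lt_trans hl₂1 hl₁1
  -- raw root equations
  have e₁ : l₁ ^ 3 - l₁ ^ 2 - (1 + μ) * l₁ + μ = 0 := hl₁
  have e₂ : l₂ ^ 3 - l₂ ^ 2 - (1 + μ) * l₂ + μ = 0 := hl₂
  have e₃ : l₃ ^ 3 - l₃ ^ 2 - (1 + μ) * l₃ + μ = 0 := hl₃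
  -- quadratic relation between two distinct roots
  have quad : ∀ a b : ℝ, a ≠ b → a ^ 3 - a ^ 2 - (1 + μ) * a + μ = 0 →
      b ^ 3 - b ^ 2 - (1 + μ) * b + μ = 0 →
      a ^ 2 + a * b + b ^ 2 = a + b + 1 + μ := by
    intro a b hab ha hb
    have h : (a - b) * (a ^ 2 + a * b + b ^ 2 - a - b - (1 + μ)) = 0 := by
      linear_combination ha - hb
    rcases mul_eq_zero.mp h with h | h
    · exact absurd (sub_eq_zero.mp h) hab
    · linarith
  have hne12 : l₁ ≠ l₂ := ne_of_gt h21
  have hne13 : l₁ ≠ l₃ := ne_of_gt (lt_trans h32 h21)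
  have hne23 : l₂ ≠ l₃ := ne_of_gt h32
  have q12 := quad l₁ l₂ hne12 e₁ e₂
  have q13 := quad l₁ l₃ hne13 e₁ e₃
  -- elementary symmetric functions
  have hs : l₁ + l₂ + l₃ = 1 := by
    have h : (l₂ - l₃) * (l₁ + l₂ + l₃ - 1) = 0 := by linear_combination q12 - q13
    rcases mul_eq_zero.mp h with h | h
    · exact absurd (sub_eq_zero.mp h) hne23
    · linarith
  have hp2 : l₁ * l₂ + l₁ * l₃ + l₂ * l₃ = -(1 + μ) := by
    linear_combination (l₁ + l₂) * hs - q12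
  have hp3 : l₁ * l₂ * l₃ = -μ := by
    linear_combination e₁ - l₁ ^ 2 * hs + l₁ * hp2
  -- full factorization
  have fact : ∀ c : ℝ, c ^ 3 - c ^ 2 - (1 + μ) * c + μ = (c - l₁) * (c - l₂) * (c - l₃) := by
    intro c
    linear_combination c ^ 2 * hs - c * hp2 + hp3
  refine ⟨l₁, l₂, l₃, h32, h21, e₁, e₂, e₃, ?_, hl₃0, hl₂0, hl₂1, hl₁1, ?_⟩
  · intro r hr
    have h := fact r
    rw [hr] at h
    rcases mul_eq_zero.mp h.symm with h' | h'
    · rcases mul_eq_zero.mp h' with h'' | h''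
      · exact Or.inl (sub_eq_zero.mp h'')
      · exact Or.inr (Or.inl (sub_eq_zero.mp h''))
    · exact Or.inr (Or.inr (sub_eq_zero.mp h'))
  · intro hμ1
    have hπ := Real.pi_pos
    -- position of the cosines
    have hc5 : Real.cos (5 * π / 7) < 0 :=
      Real.cos_neg_of_pi_div_two_lt_of_lt (by linarith) (by linarith)
    have hc3pos : 0 < Real.cos (3 * π / 7) :=
      Real.cos_pos_of_mem_Ioo ⟨by linarith, by linarith⟩
    have hc3lt : Real.cos (3 * π / 7) < 1 / 2 := by
      have := Real.cos_lt_cos_of_nonneg_of_le_pi (by positivity : (0:ℝ) ≤ π / 3)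
        (by linarith : 3 * π / 7 ≤ π) (by linarith)
      rwa [Real.cos_pi_div_three] at this
    have hc1gt : 1 / 2 < Real.cos (π / 7) := by
      have := Real.cos_lt_cos_of_nonneg_of_le_pi (by positivity : (0:ℝ) ≤ π / 7)
        (by linarith : π / 3 ≤ π) (by linarith)
      rwa [Real.cos_pi_div_three] at this
    have k5 := cubic_five_pi_div_seven
    have k3 := cubic_three_pi_div_seven
    have k1 := cubic_pi_div_seven
    constructor
    · -- l₃ ≤ 2 cos (5π/7)
      set c := 2 * Real.cos (5 * π / 7) with hc
      have hcneg : c < 0 := by rw [hc]; linarith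
      have hfc : c ^ 3 - c ^ 2 - (1 + μ) * c + μ = (μ - 1) * (1 - c) := by
        rw [hc]; linear_combination k5
      have hfcpos : 0 ≤ (c - l₁) * (c - l₂) * (c - l₃) := by
        rw [← fact c, hfc]
        have : 0 ≤ (μ - 1) * (1 - c) := mul_nonneg (by linarith) (by linarith)
        linarith
      have hprod : 0 < (c - l₁) * (c - l₂) :=
        mul_pos_of_neg_of_neg (by linarith) (by linarith)
      by_contra hcon
      push_neg at hcon
      have := mul_neg_of_pos_of_neg hprod (show c - l₃ < 0 by linarith)
      linarith
    constructor
    · -- 2 cos (3π/7) ≤ l₂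
      set c := 2 * Real.cos (3 * π / 7) with hc
      have hc0 : 0 < c := by rw [hc]; linarith
      have hc1 : c < 1 := by rw [hc]; linarith
      have hfc : c ^ 3 - c ^ 2 - (1 + μ) * c + μ = (μ - 1) * (1 - c) := by
        rw [hc]; linear_combination k3
      have hfcpos : 0 ≤ (c - l₁) * (c - l₂) * (c - l₃) := by
        rw [← fact c, hfc]
        have : 0 ≤ (μ - 1) * (1 - c) := mul_nonneg (by linarith) (by linarith)
        linarith
      by_contra hcon
      push_neg at hcon
      have h12 : (c - l₁) * (c - l₂) < 0 :=
        mul_neg_of_neg_of_pos (by linarith) (by linarith)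
      have := mul_neg_of_neg_of_pos h12 (show 0 < c - l₃ by linarith)
      linarith
    · -- 2 cos (π/7) ≤ l₁
      set c := 2 * Real.cos (π / 7) with hc
      have hc1 : 1 < c := by rw [hc]; linarith
      have hfc : c ^ 3 - c ^ 2 - (1 + μ) * c + μ = (μ - 1) * (1 - c) := by
        rw [hc]; linear_combination k1
      have hfcneg : (c - l₁) * (c - l₂) * (c - l₃) ≤ 0 := by
        rw [← fact c, hfc]
        have : 0 ≤ (μ - 1) * (c - 1) := mul_nonneg (by linarith) (by linarith)
        linarith
      by_contra hcon
      push_neg at hcon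
      have := mul_pos (mul_pos (show 0 < c - l₁ by linarith)
        (show 0 < c - l₂ by linarith)) (show 0 < c - l₃ by linarith)
      linarith
end

section
/- For μ > 0 let λ₁(μ) denote the largest real root and λ₃(μ) the smallest real root of the cubic p_μ(λ) = λ³ − λ² − (1 + μ)λ + μ. Then λ₁(μ)/√μ → 1 and λ₃(μ)/√μ → −1 as μ → ∞. -/
open Filter Real

/-- Existence of a root of the cubic in an interval, via the intermediate value theorem. -/
lemma stmt13_root_exists (μ a b : ℝ) (hab : a ≤ b)
    (ha : a ^ 3 - a ^ 2 - (1 + μ) * a + μ ≤ 0)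
    (hb : 0 ≤ b ^ 3 - b ^ 2 - (1 + μ) * b + μ) :
    ∃ r ∈ Set.Icc a b, r ^ 3 - r ^ 2 - (1 + μ) * r + μ = 0 := by
  have hc : ContinuousOn (fun x : ℝ => x ^ 3 - x ^ 2 - (1 + μ) * x + μ) (Set.Icc a b) := by
    fun_prop
  obtain ⟨r, hr, hr0⟩ := intermediate_value_Icc hab hc ⟨ha, hb⟩
  exact ⟨r, hr, hr0⟩

/-- Bounds for the largest root: `√μ ≤ λ₁ ≤ √μ + 2`. -/
lemma stmt13_bound₁ (μ L : ℝ) (hμ : 0 < μ)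
    (hL : L ^ 3 - L ^ 2 - (1 + μ) * L + μ = 0)
    (hmax : ∀ r : ℝ, r ^ 3 - r ^ 2 - (1 + μ) * r + μ = 0 → r ≤ L) :
    Real.sqrt μ ≤ L ∧ L ≤ Real.sqrt μ + 2 := by
  set s := Real.sqrt μ with hs
  have hs2 : s ^ 2 = μ := Real.sq_sqrt hμ.le
  have hs0 : 0 < s := Real.sqrt_pos.2 hμ
  constructor
  · obtain ⟨r, hr, hr0⟩ := stmt13_root_exists μ s (s + 2) (by linarith)
      (by nlinarith) (by nlinarith)
    exact le_trans hr.1 (hmax r hr0)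
  · by_contra h
    push_neg at h
    nlinarith [hL, h, hs0, sq_nonneg (L - s - 2), sq_nonneg L]

/-- Bounds for the smallest root: `-√μ - 1 ≤ λ₃ ≤ -√μ`. -/
lemma stmt13_bound₃ (μ L : ℝ) (hμ : 0 < μ)
    (hL : L ^ 3 - L ^ 2 - (1 + μ) * L + μ = 0)
    (hmin : ∀ r : ℝ, r ^ 3 - r ^ 2 - (1 + μ) * r + μ = 0 → L ≤ r) :
    -Real.sqrt μ - 1 ≤ L ∧ L ≤ -Real.sqrt μ := by
  set s := Real.sqrt μ with hs
  have hs2 : s ^ 2 = μ := Real.sq_sqrt hμ.le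
  have hs0 : 0 < s := Real.sqrt_pos.2 hμ
  constructor
  · by_contra h
    push_neg at h
    nlinarith [hL, h, hs0, sq_nonneg (L + s + 1), sq_nonneg L]
  · obtain ⟨r, hr, hr0⟩ := stmt13_root_exists μ (-s - 1) (-s) (by linarith)
      (by nlinarith) (by nlinarith)
    exact le_trans (hmin r hr0) hr.2

lemma stmt13_sqrt_top : Tendsto Real.sqrt atTop atTop := by
  apply tendsto_atTop_atTop.2
  intro b
  refine ⟨b ^ 2, fun a ha => ?_⟩
  rcases le_or_gt b 0 with hb | hb
  · exact hb.trans (Real.sqrt_nonneg a)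
  · calc b = Real.sqrt (b ^ 2) := (Real.sqrt_sq hb.le).symm
      _ ≤ Real.sqrt a := Real.sqrt_le_sqrt ha

/-- for `μ > 0` let `λ₁(μ)` be the largest and `λ₃(μ)` the smallest real
root of `p_μ(λ) = λ³ − λ² − (1 + μ)λ + μ`. Then `λ₁(μ)/√μ → 1` and `λ₃(μ)/√μ → −1`
as `μ → ∞`. -/
theorem stmt_13 (lam₁ lam₃ : ℝ → ℝ)
    (h₁ : ∀ μ : ℝ, 0 < μ →
      (lam₁ μ) ^ 3 - (lam₁ μ) ^ 2 - (1 + μ) * lam₁ μ + μ = 0 ∧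
      ∀ r : ℝ, r ^ 3 - r ^ 2 - (1 + μ) * r + μ = 0 → r ≤ lam₁ μ)
    (h₃ : ∀ μ : ℝ, 0 < μ →
      (lam₃ μ) ^ 3 - (lam₃ μ) ^ 2 - (1 + μ) * lam₃ μ + μ = 0 ∧
      ∀ r : ℝ, r ^ 3 - r ^ 2 - (1 + μ) * r + μ = 0 → lam₃ μ ≤ r) :
    Tendsto (fun μ : ℝ => lam₁ μ / Real.sqrt μ) atTop (nhds 1) ∧
      Tendsto (fun μ : ℝ => lam₃ μ / Real.sqrt μ) atTop (nhds (-1)) := by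
  have hdiv : Tendsto (fun μ : ℝ => 1 / Real.sqrt μ) atTop (nhds 0) :=
    Tendsto.div_atTop tendsto_const_nhds stmt13_sqrt_top
  have hev : ∀ᶠ μ : ℝ in atTop, 0 < μ := eventually_gt_atTop 0
  constructor
  · refine tendsto_of_tendsto_of_tendsto_of_le_of_le' tendsto_const_nhds
      (by simpa using tendsto_const_nhds.add (hdiv.const_mul 2) : Tendsto
        (fun μ : ℝ => 1 + 2 * (1 / Real.sqrt μ)) atTop (nhds 1)) ?_ ?_
    · filter_upwards [hev] with μ hμ
      have hs0 : 0 < Real.sqrt μ := Real.sqrt_pos.2 hμ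
      have := (stmt13_bound₁ μ (lam₁ μ) hμ (h₁ μ hμ).1 (h₁ μ hμ).2).1
      rw [le_div_iff₀ hs0]; linarith
    · filter_upwards [hev] with μ hμ
      have hs0 : 0 < Real.sqrt μ := Real.sqrt_pos.2 hμ
      have := (stmt13_bound₁ μ (lam₁ μ) hμ (h₁ μ hμ).1 (h₁ μ hμ).2).2
      rw [div_le_iff₀ hs0]
      have : lam₁ μ ≤ Real.sqrt μ + 2 := this
      calc lam₁ μ ≤ Real.sqrt μ + 2 := this
        _ = (1 + 2 * (1 / Real.sqrt μ)) * Real.sqrt μ := by field_simp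
  · refine tendsto_of_tendsto_of_tendsto_of_le_of_le'
      (by simpa using tendsto_const_nhds.sub hdiv : Tendsto
        (fun μ : ℝ => -1 - 1 / Real.sqrt μ) atTop (nhds (-1)))
      tendsto_const_nhds ?_ ?_
    · filter_upwards [hev] with μ hμ
      have hs0 : 0 < Real.sqrt μ := Real.sqrt_pos.2 hμ
      have := (stmt13_bound₃ μ (lam₃ μ) hμ (h₃ μ hμ).1 (h₃ μ hμ).2).1
      rw [le_div_iff₀ hs0]
      calc (-1 - 1 / Real.sqrt μ) * Real.sqrt μ = -Real.sqrt μ - 1 := by field_simp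
        _ ≤ lam₃ μ := this
    · filter_upwards [hev] with μ hμ
      have hs0 : 0 < Real.sqrt μ := Real.sqrt_pos.2 hμ
      have := (stmt13_bound₃ μ (lam₃ μ) hμ (h₃ μ hμ).1 (h₃ μ hμ).2).2
      rw [div_le_iff₀ hs0]; linarith
end

section
/- (BFBt similarity) Assume S₁ ∈ ℝ^{m×m} is invertible and C ∈ ℝ^{p×m} has reduced singular value decomposition Cᵀ = Û Σ̂ Vᵀ, where Û ∈ ℝ^{m×p} satisfies ÛᵀÛ = I_p, Σ̂ ∈ ℝ^{p×p} is diagonal and invertible, and V ∈ ℝ^{p×p} is orthogonal. Define the BFBt approximation Ŝ₂⁻¹ = (C Cᵀ)⁻¹ C S₁ Cᵀ (C Cᵀ)⁻¹ and S₂ = C S₁⁻¹ Cᵀ. Then C Cᵀ is invertible and Ŝ₂⁻¹ S₂ = V Σ̂⁻¹ (Ûᵀ S₁ Û)(Ûᵀ S₁⁻¹ Û) Σ̂ Vᵀ; in particular Ŝ₂⁻¹ S₂ is similar to W = (Ûᵀ S₁ Û)(Ûᵀ S₁⁻¹ Û) and has the same characteristic polynomial as W. -/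
open Matrix Polynomial

lemma charpoly_conj_aux {n : ℕ} (P A : Matrix (Fin n) (Fin n) ℝ) (hP : IsUnit P.det) :
    (P * A * P⁻¹).charpoly = A.charpoly := by
  have h1 : P * P⁻¹ = 1 := Matrix.mul_nonsing_inv P hP
  have h2 : P⁻¹ * P = 1 := Matrix.nonsing_inv_mul P hP
  have key : charmatrix (P * A * P⁻¹) =
      (P.map Polynomial.C) * charmatrix A * ((P⁻¹).map Polynomial.C) := by
    unfold charmatrix
    simp only [RingHom.mapMatrix_apply, Matrix.mul_sub, Matrix.sub_mul]
    congr 1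
    · have hsc : Matrix.scalar (Fin n) (X : ℝ[X]) = (X : ℝ[X]) • (1 : Matrix (Fin n) (Fin n) ℝ[X]) := by
        rw [Matrix.scalar_apply, smul_eq_diagonal_mul]
        simp
      rw [hsc, Matrix.mul_smul, Matrix.smul_mul, Matrix.mul_one, ← Matrix.map_mul, h1,
        Matrix.map_one _ (map_zero _) (map_one _)]
    · simp [Matrix.map_mul, Matrix.mul_assoc]
  have hdet : (P.map (Polynomial.C : ℝ →+* ℝ[X])).det * ((P⁻¹).map Polynomial.C).det = 1 := by
    rw [← Matrix.det_mul, ← Matrix.map_mul, h1]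
    simp
  rw [Matrix.charpoly, Matrix.charpoly, key, Matrix.det_mul, Matrix.det_mul]
  rw [mul_comm, ← mul_assoc, mul_comm ((P⁻¹).map Polynomial.C).det, hdet, one_mul]

/-- BFBt similarity: assume `S₁` invertible and `Cᵀ = Û Σ̂ Vᵀ` a reduced
SVD (`ÛᵀÛ = I_p`, `Σ̂` diagonal and invertible, `V` orthogonal). With
`Ŝ₂⁻¹ = (CCᵀ)⁻¹ C S₁ Cᵀ (CCᵀ)⁻¹` and `S₂ = C S₁⁻¹ Cᵀ`, the matrix `CCᵀ` is invertible
and `Ŝ₂⁻¹ S₂ = V Σ̂⁻¹ (Ûᵀ S₁ Û)(Ûᵀ S₁⁻¹ Û) Σ̂ Vᵀ`; in particular `Ŝ₂⁻¹ S₂` is similar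
to `W = (Ûᵀ S₁ Û)(Ûᵀ S₁⁻¹ Û)` and has the same characteristic polynomial as `W`. -/
theorem stmt_14 (m p : ℕ)
    (S₁ : Matrix (Fin m) (Fin m) ℝ) (hS₁ : IsUnit S₁.det)
    (C : Matrix (Fin p) (Fin m) ℝ)
    (hatU : Matrix (Fin m) (Fin p) ℝ) (Sig V : Matrix (Fin p) (Fin p) ℝ)
    (hSVD : Cᵀ = hatU * Sig * Vᵀ) (hU : hatUᵀ * hatU = 1)
    (hSigDiag : Sig.IsDiag) (hSig : IsUnit Sig.det)
    (hV : Vᵀ * V = 1) (hV' : V * Vᵀ = 1)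
    (hatS₂inv : Matrix (Fin p) (Fin p) ℝ)
    (hhatS₂inv : hatS₂inv = (C * Cᵀ)⁻¹ * (C * S₁ * Cᵀ) * (C * Cᵀ)⁻¹)
    (S₂ : Matrix (Fin p) (Fin p) ℝ) (hS₂def : S₂ = C * S₁⁻¹ * Cᵀ) :
    IsUnit (C * Cᵀ).det ∧
      hatS₂inv * S₂ =
        V * Sig⁻¹ * ((hatUᵀ * S₁ * hatU) * (hatUᵀ * S₁⁻¹ * hatU)) * Sig * Vᵀ ∧
      (hatS₂inv * S₂).charpoly = ((hatUᵀ * S₁ * hatU) * (hatUᵀ * S₁⁻¹ * hatU)).charpoly := by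
  have hSigT : Sigᵀ = Sig := by
    ext i j
    by_cases h : i = j
    · subst h; rfl
    · rw [Matrix.transpose_apply, hSigDiag h, hSigDiag (Ne.symm h)]
  have hC : C = V * Sig * hatUᵀ := by
    have := congrArg Matrix.transpose hSVD
    simpa [Matrix.transpose_mul, Matrix.mul_assoc, hSigT] using this
  -- handy association lemmas
  have hVdet : IsUnit V.det := by
    refine IsUnit.of_mul_eq_one Vᵀ.det ?_
    rw [← Matrix.det_mul, hV']; simp
  have hSS' : Sig * Sig⁻¹ = 1 := Matrix.mul_nonsing_inv Sig hSig
  have hS'S : Sig⁻¹ * Sig = 1 := Matrix.nonsing_inv_mul Sig hSig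
  have hCCt : C * Cᵀ = V * (Sig * (Sig * Vᵀ)) := by
    rw [hSVD, hC]
    simp only [Matrix.mul_assoc]
    rw [← Matrix.mul_assoc hatUᵀ hatU, hU, Matrix.one_mul]
  have hdetCCt : IsUnit (C * Cᵀ).det := by
    rw [hCCt]
    simp only [Matrix.det_mul]
    have hVtdet : IsUnit Vᵀ.det := by rw [Matrix.det_transpose]; exact hVdet
    exact hVdet.mul (hSig.mul (hSig.mul hVtdet))
  have hinv : (C * Cᵀ)⁻¹ = V * (Sig⁻¹ * (Sig⁻¹ * Vᵀ)) := by
    apply Matrix.inv_eq_right_inv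
    rw [hCCt]
    simp only [Matrix.mul_assoc]
    rw [← Matrix.mul_assoc Vᵀ V, hV, Matrix.one_mul,
      ← Matrix.mul_assoc Sig Sig⁻¹, hSS', Matrix.one_mul,
      ← Matrix.mul_assoc Sig Sig⁻¹, hSS', Matrix.one_mul, hV']
  have assocV : ∀ (X : Matrix (Fin p) (Fin p) ℝ), Vᵀ * (V * X) = X := by
    intro X; rw [← Matrix.mul_assoc, hV, Matrix.one_mul]
  have assocS1 : ∀ (X : Matrix (Fin p) (Fin p) ℝ), Sig⁻¹ * (Sig * X) = X := by
    intro X; rw [← Matrix.mul_assoc, hS'S, Matrix.one_mul]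
  have assocS2 : ∀ (X : Matrix (Fin p) (Fin p) ℝ), Sig * (Sig⁻¹ * X) = X := by
    intro X; rw [← Matrix.mul_assoc, hSS', Matrix.one_mul]
  have assocU : ∀ (X : Matrix (Fin p) (Fin p) ℝ), hatUᵀ * (hatU * X) = X := by
    intro X; rw [← Matrix.mul_assoc, hU, Matrix.one_mul]
  have hmain : hatS₂inv * S₂ =
      V * Sig⁻¹ * ((hatUᵀ * S₁ * hatU) * (hatUᵀ * S₁⁻¹ * hatU)) * Sig * Vᵀ := by
    rw [hhatS₂inv, hS₂def, hinv, hSVD, hC]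
    simp only [Matrix.mul_assoc, assocV, assocS1, assocS2, assocU]
  refine ⟨hdetCCt, hmain, ?_⟩
  have hSinvdet : IsUnit (Sig⁻¹).det := by
    refine IsUnit.of_mul_eq_one Sig.det ?_
    rw [← Matrix.det_mul, hS'S]; simp
  have hPdet : IsUnit (V * Sig⁻¹).det := by
    rw [Matrix.det_mul]; exact hVdet.mul hSinvdet
  have hPinv : (V * Sig⁻¹)⁻¹ = Sig * Vᵀ := by
    apply Matrix.inv_eq_right_inv
    rw [Matrix.mul_assoc, ← Matrix.mul_assoc Sig⁻¹ Sig, hS'S, Matrix.one_mul, hV']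
  have : hatS₂inv * S₂ =
      (V * Sig⁻¹) * ((hatUᵀ * S₁ * hatU) * (hatUᵀ * S₁⁻¹ * hatU)) * (V * Sig⁻¹)⁻¹ := by
    rw [hPinv, hmain]; simp only [Matrix.mul_assoc]
  rw [this]
  exact charpoly_conj_aux _ _ hPdet
end

section
/- Let S₁ ∈ ℝ^{m×m} be invertible, U = [Û Ũ] ∈ ℝ^{m×m} orthogonal with Û ∈ ℝ^{m×p}, M = Ûᵀ S₁ Û and S = Ũᵀ S₁ Ũ − (Ũᵀ S₁ Û) M⁻¹ (Ûᵀ S₁ Ũ) both invertible, and W = I_p + (Ûᵀ S₁ Ũ) S⁻¹ (Ũᵀ S₁ Û) M⁻¹. If p > m/2, then 1 is an eigenvalue of W whose eigenspace has dimension at least 2p − m; indeed W x = x for every x = M z with z ∈ ker(Ũᵀ S₁ Û), a subspace of dimension at least 2p − m. -/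
open Matrix

/-- with `S₁` invertible, `U = [Û Ũ]` orthogonal, `M = Ûᵀ S₁ Û` and
`S = Ũᵀ S₁ Ũ − (Ũᵀ S₁ Û) M⁻¹ (Ûᵀ S₁ Ũ)` invertible, and
`W = I_p + (Ûᵀ S₁ Ũ) S⁻¹ (Ũᵀ S₁ Û) M⁻¹`: if `p > m/2`, then `1` is an eigenvalue of
`W` whose eigenspace has dimension at least `2p − m`; indeed `W x = x` for every
`x = M z` with `z ∈ ker(Ũᵀ S₁ Û)`, a subspace of dimension at least `2p − m`. -/
theorem stmt_16 (m p : ℕ) (hpm : p ≤ m) (hp2 : m < 2 * p)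
    (S₁ : Matrix (Fin m) (Fin m) ℝ) (hS₁ : IsUnit S₁.det)
    (hatU : Matrix (Fin m) (Fin p) ℝ) (tldU : Matrix (Fin m) (Fin (m - p)) ℝ)
    (hUorth₁ : (fromCols hatU tldU)ᵀ * fromCols hatU tldU = 1)
    (hUorth₂ : fromCols hatU tldU * (fromCols hatU tldU)ᵀ = 1)
    (M : Matrix (Fin p) (Fin p) ℝ) (hM : M = hatUᵀ * S₁ * hatU)
    (S : Matrix (Fin (m - p)) (Fin (m - p)) ℝ)
    (hS : S = tldUᵀ * S₁ * tldU - (tldUᵀ * S₁ * hatU) * M⁻¹ * (hatUᵀ * S₁ * tldU))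
    (hMu : IsUnit M.det) (hSu : IsUnit S.det)
    (W : Matrix (Fin p) (Fin p) ℝ)
    (hW : W = 1 + (hatUᵀ * S₁ * tldU) * S⁻¹ * (tldUᵀ * S₁ * hatU) * M⁻¹) :
    (∀ z : Fin p → ℝ, (tldUᵀ * S₁ * hatU) *ᵥ z = 0 → W *ᵥ (M *ᵥ z) = M *ᵥ z) ∧
      2 * p - m ≤ Module.finrank ℝ (LinearMap.ker (tldUᵀ * S₁ * hatU).mulVecLin) ∧
      Module.End.HasEigenvalue W.mulVecLin 1 ∧
      2 * p - m ≤ Module.finrank ℝ (Module.End.eigenspace W.mulVecLin 1) := by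
  have hA : ∀ z : Fin p → ℝ, (tldUᵀ * S₁ * hatU) *ᵥ z = 0 → W *ᵥ (M *ᵥ z) = M *ᵥ z := by
    intro z hz
    have h1 : M⁻¹ *ᵥ (M *ᵥ z) = z := by
      rw [Matrix.mulVec_mulVec, Matrix.nonsing_inv_mul M hMu, Matrix.one_mulVec]
    rw [hW, Matrix.add_mulVec, Matrix.one_mulVec]
    have h0 : ((hatUᵀ * S₁ * tldU) * S⁻¹ * (tldUᵀ * S₁ * hatU) * M⁻¹) *ᵥ (M *ᵥ z) = 0 := by
      rw [← Matrix.mulVec_mulVec, h1, ← Matrix.mulVec_mulVec, hz, Matrix.mulVec_zero]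
    rw [h0, add_zero]
  refine ⟨hA, ?_⟩
  have hker : 2 * p - m ≤ Module.finrank ℝ (LinearMap.ker (tldUᵀ * S₁ * hatU).mulVecLin) := by
    have hrank := LinearMap.finrank_range_add_finrank_ker (tldUᵀ * S₁ * hatU).mulVecLin
    have hp' : Module.finrank ℝ (Fin p → ℝ) = p := Module.finrank_fin_fun ℝ
    have hr_le : Module.finrank ℝ (LinearMap.range (tldUᵀ * S₁ * hatU).mulVecLin) ≤ m - p := by
      calc Module.finrank ℝ (LinearMap.range (tldUᵀ * S₁ * hatU).mulVecLin)
          ≤ Module.finrank ℝ (Fin (m - p) → ℝ) := Submodule.finrank_le _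
        _ = m - p := Module.finrank_fin_fun ℝ
    omega
  refine ⟨hker, ?_⟩
  have hMinj : Function.Injective M.mulVecLin := by
    intro x y hxy
    have h2 := congrArg (fun v => M⁻¹ *ᵥ v) hxy
    simpa [Matrix.mulVecLin_apply, Matrix.mulVec_mulVec, Matrix.nonsing_inv_mul M hMu,
      Matrix.one_mulVec] using h2
  have hmap : Submodule.map M.mulVecLin (LinearMap.ker (tldUᵀ * S₁ * hatU).mulVecLin) ≤
      Module.End.eigenspace W.mulVecLin 1 := by
    rintro x ⟨z, hz, rfl⟩
    rw [Module.End.mem_eigenspace_iff, one_smul]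
    have hz' : (tldUᵀ * S₁ * hatU) *ᵥ z = 0 := hz
    simpa [Matrix.mulVecLin_apply] using hA z hz'
  have hfe := (Submodule.equivMapOfInjective M.mulVecLin hMinj
      (LinearMap.ker (tldUᵀ * S₁ * hatU).mulVecLin)).finrank_eq
  have hmono := Submodule.finrank_mono hmap
  have hdim : 2 * p - m ≤ Module.finrank ℝ (Module.End.eigenspace W.mulVecLin 1) := by omega
  refine ⟨?_, hdim⟩
  rw [Module.End.hasEigenvalue_iff]
  intro hbot
  rw [hbot] at hdim
  rw [finrank_bot] at hdim
  omega
end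

section
/- Let S₁ ∈ ℝ^{m×m} be symmetric positive definite and let Û ∈ ℝ^{m×p} satisfy Ûᵀ Û = I_p (p ≤ m). Then every eigenvalue of W = (Ûᵀ S₁ Û)(Ûᵀ S₁⁻¹ Û) is real and is greater than or equal to 1. Consequently, every generalized eigenvalue μ of S₂ z = μ Ŝ₂ z with the BFBt approximation Ŝ₂⁻¹ = (C Cᵀ)⁻¹ C S₁ Cᵀ (C Cᵀ)⁻¹ and Cᵀ = Û Σ̂ Vᵀ a reduced SVD satisfies μ ≥ 1. -/
open Matrix Polynomial

private lemma evalCharpoly {R : Type*} [CommRing R] {n : ℕ}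
    (N : Matrix (Fin n) (Fin n) R) (μ : R) :
    N.charpoly.eval μ = (μ • (1 : Matrix (Fin n) (Fin n) R) - N).det := by
  rw [Matrix.charpoly, ← Polynomial.coe_evalRingHom, RingHom.map_det]
  congr 1
  ext i j
  by_cases h : i = j <;>
    simp [Matrix.charmatrix_apply, h, Matrix.one_apply, Matrix.diagonal_apply]

private lemma quadForm {k l : ℕ} (N : Matrix (Fin k) (Fin k) ℝ)
    (P : Matrix (Fin k) (Fin l) ℝ) (x : Fin l → ℝ) :
    x ⬝ᵥ ((Pᵀ * N * P) *ᵥ x) = (P *ᵥ x) ⬝ᵥ (N *ᵥ (P *ᵥ x)) := by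
  rw [Matrix.mul_assoc, ← Matrix.mulVec_mulVec, Matrix.dotProduct_mulVec,
    Matrix.vecMul_transpose, Matrix.mulVec_mulVec]

private lemma dotTranspose {k l : ℕ} (P : Matrix (Fin k) (Fin l) ℝ)
    (x : Fin l → ℝ) (w : Fin k → ℝ) :
    x ⬝ᵥ (Pᵀ *ᵥ w) = (P *ᵥ x) ⬝ᵥ w := by
  rw [Matrix.dotProduct_mulVec, Matrix.vecMul_transpose]

private lemma quadSelf {k l : ℕ} (P : Matrix (Fin k) (Fin l) ℝ) (x : Fin l → ℝ) :
    (P *ᵥ x) ⬝ᵥ (P *ᵥ x) = x ⬝ᵥ ((Pᵀ * P) *ᵥ x) := by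
  rw [← Matrix.mulVec_mulVec, dotTranspose]

private lemma dotSelfNonneg {n : ℕ} (x : Fin n → ℝ) : 0 ≤ x ⬝ᵥ x :=
  Finset.sum_nonneg fun i _ => mul_self_nonneg (x i)


private lemma symOfHerm {n : ℕ} {N : Matrix (Fin n) (Fin n) ℝ} (h : N.IsHermitian) :
    Nᵀ = N := by
  rw [← Matrix.conjTranspose_eq_transpose_of_trivial]; exact h

private lemma hermOfSym {n : ℕ} {N : Matrix (Fin n) (Fin n) ℝ} (h : Nᵀ = N) :
    N.IsHermitian := by
  show Nᴴ = N
  rw [Matrix.conjTranspose_eq_transpose_of_trivial]; exact h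

private lemma keyLemma {n : ℕ} (M : Matrix (Fin n) (Fin n) ℝ) (hsym : Mᵀ = M)
    (hbound : ∀ x : Fin n → ℝ, x ⬝ᵥ x ≤ x ⬝ᵥ (M *ᵥ x)) (μ : ℂ) (v : Fin n → ℂ)
    (hv : v ≠ 0) (heig : (M.map (Complex.ofReal : ℝ → ℂ)) *ᵥ v = μ • v) :
    μ.im = 0 ∧ 1 ≤ μ.re := by
  set a : Fin n → ℝ := fun i => (v i).re with ha
  set b : Fin n → ℝ := fun i => (v i).im with hb
  have hmv : ∀ i, (∑ j, (M i j : ℂ) * v j) = μ * v i := by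
    intro i
    have := congrFun heig i
    simpa [Matrix.mulVec, dotProduct, Matrix.map_apply] using this
  have hare : M *ᵥ a = μ.re • a - μ.im • b := by
    funext i
    have h1 := congrArg Complex.re (hmv i)
    rw [Complex.re_sum] at h1
    simp only [Complex.mul_re, Complex.ofReal_re, Complex.ofReal_im, zero_mul,
      sub_zero] at h1
    simpa [Matrix.mulVec, dotProduct, ha, hb] using h1
  have hbre : M *ᵥ b = μ.im • a + μ.re • b := by
    funext i
    have h1 := congrArg Complex.im (hmv i)
    rw [Complex.im_sum] at h1
    simp only [Complex.mul_im, Complex.ofReal_re, Complex.ofReal_im, zero_mul,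
      add_zero] at h1
    simpa [Matrix.mulVec, dotProduct, ha, hb, add_comm] using h1
  have hsymm : a ⬝ᵥ (M *ᵥ b) = b ⬝ᵥ (M *ᵥ a) := by
    nth_rewrite 1 [← hsym]
    rw [dotTranspose, dotProduct_comm]
  have e1 : a ⬝ᵥ (M *ᵥ b) = μ.im * (a ⬝ᵥ a) + μ.re * (a ⬝ᵥ b) := by
    rw [hbre]
    simp [dotProduct_add, dotProduct_smul, smul_eq_mul]
  have e2 : b ⬝ᵥ (M *ᵥ a) = μ.re * (b ⬝ᵥ a) - μ.im * (b ⬝ᵥ b) := by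
    rw [hare]
    simp [dotProduct_sub, dotProduct_smul, smul_eq_mul]
  have hab : a ⬝ᵥ b = b ⬝ᵥ a := dotProduct_comm a b
  have him0 : μ.im * (a ⬝ᵥ a + b ⬝ᵥ b) = 0 := by
    have h := hsymm
    rw [e1, e2, hab] at h
    linear_combination h
  have hpos : 0 < a ⬝ᵥ a + b ⬝ᵥ b := by
    rcases lt_or_eq_of_le (add_nonneg (dotSelfNonneg a) (dotSelfNonneg b)) with h | h
    · exact h
    exfalso
    have h0a := dotSelfNonneg a
    have h0b := dotSelfNonneg b
    have haa : a ⬝ᵥ a = 0 := by linarith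
    have hbb : b ⬝ᵥ b = 0 := by linarith
    have ha0 : a = 0 := dotProduct_self_eq_zero.mp haa
    have hb0 : b = 0 := dotProduct_self_eq_zero.mp hbb
    apply hv
    funext i
    exact Complex.ext (congrFun ha0 i) (congrFun hb0 i)
  have him : μ.im = 0 := by
    rcases mul_eq_zero.mp him0 with h | h
    · exact h
    · exact absurd h hpos.ne'
  refine ⟨him, ?_⟩
  have e3 : a ⬝ᵥ (M *ᵥ a) + b ⬝ᵥ (M *ᵥ b) = μ.re * (a ⬝ᵥ a + b ⬝ᵥ b) := by
    rw [hare, hbre, him]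
    simp [dotProduct_sub, dotProduct_add, dotProduct_smul]
    ring
  have hba := hbound a
  have hbb := hbound b
  have hS : (a ⬝ᵥ a + b ⬝ᵥ b) ≤ μ.re * (a ⬝ᵥ a + b ⬝ᵥ b) := by linarith
  have := le_of_mul_le_mul_right (by linarith : 1 * (a ⬝ᵥ a + b ⬝ᵥ b) ≤ μ.re * (a ⬝ᵥ a + b ⬝ᵥ b)) hpos
  exact this

open scoped MatrixOrder in
private lemma sqrtExists {n : ℕ} (S : Matrix (Fin n) (Fin n) ℝ) (h : S.PosSemidef) :
    ∃ T : Matrix (Fin n) (Fin n) ℝ, T * T = S ∧ T.PosSemidef :=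
  ⟨CFC.sqrt S, CFC.sqrt_mul_sqrt_self S h.nonneg, (CFC.sqrt_nonneg S).posSemidef⟩

/-- let `S₁` be symmetric positive definite and `Ûᵀ Û = I_p` (`p ≤ m`).
Then every eigenvalue of `W = (Ûᵀ S₁ Û)(Ûᵀ S₁⁻¹ Û)` is real and at least `1`.
Consequently, every generalized eigenvalue `μ` of `S₂ z = μ Ŝ₂ z` with the BFBt
approximation `Ŝ₂⁻¹ = (CCᵀ)⁻¹ C S₁ Cᵀ (CCᵀ)⁻¹` and `Cᵀ = Û Σ̂ Vᵀ` a reduced SVD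
satisfies `μ ≥ 1`. -/
theorem stmt_17 (m p : ℕ) (hpm : p ≤ m)
    (S₁ : Matrix (Fin m) (Fin m) ℝ) (hS₁ : S₁.PosDef)
    (hatU : Matrix (Fin m) (Fin p) ℝ) (hU : hatUᵀ * hatU = 1)
    (C : Matrix (Fin p) (Fin m) ℝ) (Sig V : Matrix (Fin p) (Fin p) ℝ)
    (hSVD : Cᵀ = hatU * Sig * Vᵀ) (hSigDiag : Sig.IsDiag) (hSig : IsUnit Sig.det)
    (hV : Vᵀ * V = 1) (hV' : V * Vᵀ = 1) :
    (∀ μ : ℂ,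
        ((((hatUᵀ * S₁ * hatU) * (hatUᵀ * S₁⁻¹ * hatU)).map
            (Complex.ofReal : ℝ → ℂ)).charpoly).IsRoot μ →
          μ.im = 0 ∧ 1 ≤ μ.re) ∧
      ∀ μ : ℝ, ∀ z : Fin p → ℝ, z ≠ 0 →
        (((C * Cᵀ)⁻¹ * (C * S₁ * Cᵀ) * (C * Cᵀ)⁻¹) * (C * S₁⁻¹ * Cᵀ)) *ᵥ z = μ • z →
          1 ≤ μ := by
  have hstar : ∀ {k : ℕ} (x : Fin k → ℝ), star x = x := fun x => funext fun i => rfl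
  set A : Matrix (Fin p) (Fin p) ℝ := hatUᵀ * S₁ * hatU with hAdef
  set B : Matrix (Fin p) (Fin p) ℝ := hatUᵀ * S₁⁻¹ * hatU with hBdef
  have hS₁T : S₁ᵀ = S₁ := symOfHerm hS₁.1
  have hS₁invPD : (S₁⁻¹).PosDef := hS₁.inv
  have hS₁invT : (S₁⁻¹)ᵀ = S₁⁻¹ := by rw [Matrix.transpose_nonsing_inv, hS₁T]
  have hUinj : ∀ x : Fin p → ℝ, hatU *ᵥ x = 0 → x = 0 := by
    intro x hx
    have h2 : hatUᵀ *ᵥ (hatU *ᵥ x) = 0 := by rw [hx, Matrix.mulVec_zero]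
    rwa [Matrix.mulVec_mulVec, hU, Matrix.one_mulVec] at h2
  have posDefConj : ∀ (N : Matrix (Fin m) (Fin m) ℝ), N.PosDef → Nᵀ = N →
      (hatUᵀ * N * hatU).PosDef := by
    intro N hN hNT
    rw [Matrix.posDef_iff_dotProduct_mulVec]
    constructor
    · apply hermOfSym
      calc (hatUᵀ * N * hatU)ᵀ = hatUᵀ * (Nᵀ * (hatUᵀ)ᵀ) := by
            rw [Matrix.transpose_mul, Matrix.transpose_mul, Matrix.transpose_transpose]
        _ = hatUᵀ * N * hatU := by
            rw [hNT, Matrix.transpose_transpose, Matrix.mul_assoc]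
    · intro x hx
      rw [hstar x, quadForm]
      have hUx : hatU *ᵥ x ≠ 0 := fun h => hx (hUinj x h)
      have := hN.dotProduct_mulVec_pos hUx
      rwa [hstar] at this
  have hA : A.PosDef := posDefConj S₁ hS₁ hS₁T
  have hB : B.PosDef := posDefConj S₁⁻¹ hS₁invPD hS₁invT
  have hAT : Aᵀ = A := symOfHerm hA.1
  have hBT : Bᵀ = B := symOfHerm hB.1
  have hAdet : IsUnit A.det := isUnit_iff_ne_zero.mpr hA.det_pos.ne'
  -- square root of S₁
  obtain ⟨T, hTT0, hTpsd⟩ := sqrtExists S₁ hS₁.posSemidef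
  have hTT : T * T = S₁ := hTT0
  have hTsym : Tᵀ = T := symOfHerm hTpsd.1
  have hTdet : T.det ≠ 0 := by
    intro h
    exact hS₁.det_pos.ne' (by rw [← hTT, Matrix.det_mul, h, mul_zero])
  have hTunit : IsUnit T.det := isUnit_iff_ne_zero.mpr hTdet
  have hTinv : T * T⁻¹ = 1 := Matrix.mul_nonsing_inv T hTunit
  have hS₁inv : S₁⁻¹ = T⁻¹ * T⁻¹ := by rw [← hTT, Matrix.mul_inv_rev]
  have hTinvT : (T⁻¹)ᵀ = T⁻¹ := by rw [Matrix.transpose_nonsing_inv, hTsym]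
  set P : Matrix (Fin m) (Fin p) ℝ := T * hatU with hPdef
  set Q : Matrix (Fin m) (Fin p) ℝ := T⁻¹ * hatU with hQdef
  have hPA : Pᵀ * P = A := by
    rw [hPdef, Matrix.transpose_mul, hTsym, hAdef, ← hTT,
      Matrix.mul_assoc, Matrix.mul_assoc, Matrix.mul_assoc]
  have hQB : Qᵀ * Q = B := by
    rw [hQdef, Matrix.transpose_mul, hTinvT, hBdef, hS₁inv,
      Matrix.mul_assoc, Matrix.mul_assoc, Matrix.mul_assoc]
  have hPQ : Pᵀ * Q = 1 := by
    rw [hPdef, hQdef, Matrix.transpose_mul, hTsym, Matrix.mul_assoc,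
      ← Matrix.mul_assoc T, hTinv, Matrix.one_mul, hU]
  have hAinv : A * A⁻¹ = 1 := Matrix.mul_nonsing_inv A hAdet
  -- Cauchy–Schwarz step
  have hCS : ∀ y : Fin p → ℝ, y ⬝ᵥ (A⁻¹ *ᵥ y) ≤ y ⬝ᵥ (B *ᵥ y) := by
    intro y
    set u : Fin m → ℝ := P *ᵥ (A⁻¹ *ᵥ y) with hu
    set w : Fin m → ℝ := Q *ᵥ y with hw
    set s : ℝ := y ⬝ᵥ (A⁻¹ *ᵥ y) with hs
    have huu : u ⬝ᵥ u = s := by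
      calc u ⬝ᵥ u = (A⁻¹ *ᵥ y) ⬝ᵥ ((Pᵀ * P) *ᵥ (A⁻¹ *ᵥ y)) := quadSelf P _
        _ = (A⁻¹ *ᵥ y) ⬝ᵥ y := by
            rw [hPA, Matrix.mulVec_mulVec, hAinv, Matrix.one_mulVec]
        _ = s := dotProduct_comm _ y
    have huw : u ⬝ᵥ w = s := by
      calc u ⬝ᵥ w = (A⁻¹ *ᵥ y) ⬝ᵥ (Pᵀ *ᵥ w) := (dotTranspose P _ w).symm
        _ = (A⁻¹ *ᵥ y) ⬝ᵥ y := by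
            rw [hw, Matrix.mulVec_mulVec, hPQ, Matrix.one_mulVec]
        _ = s := dotProduct_comm _ y
    have hww : w ⬝ᵥ w = y ⬝ᵥ (B *ᵥ y) := by rw [hw, quadSelf, hQB]
    have hcs : (u ⬝ᵥ w) ^ 2 ≤ (u ⬝ᵥ u) * (w ⬝ᵥ w) := by
      simpa [dotProduct, pow_two] using
        Finset.sum_mul_sq_le_sq_mul_sq Finset.univ u w
    rw [huu, huw, hww] at hcs
    have hs0 : 0 ≤ s := by
      have := hA.inv.posSemidef.dotProduct_mulVec_nonneg y
      rwa [hstar] at this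
    have ht0 : 0 ≤ y ⬝ᵥ (B *ᵥ y) := by
      have := hB.posSemidef.dotProduct_mulVec_nonneg y
      rwa [hstar] at this
    rcases eq_or_lt_of_le hs0 with h | h
    · rw [← h]; exact ht0
    · have : s * s ≤ s * (y ⬝ᵥ (B *ᵥ y)) := by nlinarith
      exact le_of_mul_le_mul_left this h
  -- square root of A
  obtain ⟨R, hRR0, hRpsd⟩ := sqrtExists A hA.posSemidef
  have hRR : R * R = A := hRR0
  have hRsym : Rᵀ = R := symOfHerm hRpsd.1
  have hRdet : R.det ≠ 0 := by
    intro h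
    exact hA.det_pos.ne' (by rw [← hRR, Matrix.det_mul, h, mul_zero])
  have hRunit : IsUnit R.det := isUnit_iff_ne_zero.mpr hRdet
  have hRinv : R * R⁻¹ = 1 := Matrix.mul_nonsing_inv R hRunit
  have hRinv' : R⁻¹ * R = 1 := Matrix.nonsing_inv_mul R hRunit
  set M : Matrix (Fin p) (Fin p) ℝ := R * B * R with hMdef
  have hMsym : Mᵀ = M := by
    rw [hMdef, Matrix.transpose_mul, Matrix.transpose_mul, hRsym, hBT,
      ← Matrix.mul_assoc]
  have hM1 : Rᵀ * A⁻¹ * R = 1 := by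
    rw [hRsym, show A⁻¹ = R⁻¹ * R⁻¹ by rw [← hRR, Matrix.mul_inv_rev],
      Matrix.mul_assoc, Matrix.mul_assoc R⁻¹ R⁻¹ R, hRinv', Matrix.mul_one, hRinv]
  have hbound : ∀ x : Fin p → ℝ, x ⬝ᵥ x ≤ x ⬝ᵥ (M *ᵥ x) := by
    intro x
    have h1 : x ⬝ᵥ x = (R *ᵥ x) ⬝ᵥ (A⁻¹ *ᵥ (R *ᵥ x)) := by
      rw [← quadForm A⁻¹ R x, hM1, Matrix.one_mulVec]
    have h2 : x ⬝ᵥ (M *ᵥ x) = (R *ᵥ x) ⬝ᵥ (B *ᵥ (R *ᵥ x)) := by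
      rw [hMdef, show R * B * R = Rᵀ * B * R by rw [hRsym], quadForm]
    rw [h1, h2]
    exact hCS (R *ᵥ x)
  -- map to ℂ
  have hmapmul : ∀ (X Y : Matrix (Fin p) (Fin p) ℝ),
      (X * Y).map (Complex.ofReal : ℝ → ℂ) =
        X.map (Complex.ofReal : ℝ → ℂ) * Y.map (Complex.ofReal : ℝ → ℂ) := by
    intro X Y
    ext i j
    simp [Matrix.mul_apply, Matrix.map_apply]
  have hABR : (A * B) * R = R * M := by
    rw [hMdef, ← hRR, Matrix.mul_assoc R R B, Matrix.mul_assoc R (R * B) R]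
  -- Part 1
  have part1 : ∀ μ : ℂ,
      (((A * B).map (Complex.ofReal : ℝ → ℂ)).charpoly).IsRoot μ →
        μ.im = 0 ∧ 1 ≤ μ.re := by
    intro μ hroot
    have h0 : (((A * B).map (Complex.ofReal : ℝ → ℂ)).charpoly).eval μ = 0 := hroot
    rw [evalCharpoly] at h0
    set Wc := (A * B).map (Complex.ofReal : ℝ → ℂ) with hWc
    set Mc := M.map (Complex.ofReal : ℝ → ℂ) with hMc
    set Rc := R.map (Complex.ofReal : ℝ → ℂ) with hRc
    have hcomm : Wc * Rc = Rc * Mc := by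
      rw [hWc, hRc, hMc, ← hmapmul, ← hmapmul, hABR]
    have h2 : (μ • 1 - Wc) * Rc = Rc * (μ • 1 - Mc) := by
      rw [sub_mul, mul_sub, hcomm, smul_mul_assoc, mul_smul_comm, one_mul, mul_one]
    have hdetRc : Rc.det = (R.det : ℂ) := (RingHom.map_det Complex.ofRealHom R).symm
    have hdetRc0 : Rc.det ≠ 0 := by
      rw [hdetRc]
      exact_mod_cast hRdet
    have hdet0 : (μ • 1 - Mc).det = 0 := by
      have h3 := congrArg Matrix.det h2
      rw [Matrix.det_mul, Matrix.det_mul, h0, zero_mul] at h3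
      rcases mul_eq_zero.mp h3.symm with h | h
      · exact absurd h hdetRc0
      · exact h
    obtain ⟨v, hv0, hveq⟩ := Matrix.exists_mulVec_eq_zero_iff.mpr hdet0
    have heig : Mc *ᵥ v = μ • v := by
      have := hveq
      rw [Matrix.sub_mulVec, Matrix.smul_mulVec, Matrix.one_mulVec,
        sub_eq_zero] at this
      exact this.symm
    exact keyLemma M hMsym hbound μ v hv0 heig
  refine ⟨part1, ?_⟩
  -- Part 2
  intro μ z hz hzeq
  have hSigT : Sigᵀ = Sig := by
    ext i j
    by_cases h : i = j
    · rw [h]; rfl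
    · rw [Matrix.transpose_apply, hSigDiag h, hSigDiag (Ne.symm h)]
  have hC : C = V * Sig * hatUᵀ := by
    have h := congrArg Matrix.transpose hSVD
    rw [Matrix.transpose_transpose] at h
    rw [h, Matrix.transpose_mul, Matrix.transpose_mul, Matrix.transpose_transpose,
      hSigT, Matrix.mul_assoc]
  have hSigInv : Sig * Sig⁻¹ = 1 := Matrix.mul_nonsing_inv Sig hSig
  have hSigInv' : Sig⁻¹ * Sig = 1 := Matrix.nonsing_inv_mul Sig hSig
  have hV1 : ∀ (X : Matrix (Fin p) (Fin p) ℝ), Vᵀ * (V * X) = X := fun X => by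
    rw [← Matrix.mul_assoc, hV, Matrix.one_mul]
  have hSig1 : ∀ (X : Matrix (Fin p) (Fin p) ℝ), Sig * (Sig⁻¹ * X) = X := fun X => by
    rw [← Matrix.mul_assoc, hSigInv, Matrix.one_mul]
  have hSig2 : ∀ (X : Matrix (Fin p) (Fin p) ℝ), Sig⁻¹ * (Sig * X) = X := fun X => by
    rw [← Matrix.mul_assoc, hSigInv', Matrix.one_mul]
  have hUU : ∀ (X : Matrix (Fin p) (Fin p) ℝ), hatUᵀ * (hatU * X) = X := fun X => by
    rw [← Matrix.mul_assoc, hU, Matrix.one_mul]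
  have hCC : C * Cᵀ = V * (Sig * (Sig * Vᵀ)) := by
    rw [hSVD, hC]
    simp only [Matrix.mul_assoc, hUU]
  have hCSC : C * S₁ * Cᵀ = V * (Sig * (A * (Sig * Vᵀ))) := by
    rw [hSVD, hC, hAdef]
    simp only [Matrix.mul_assoc]
  have hCSC' : C * S₁⁻¹ * Cᵀ = V * (Sig * (B * (Sig * Vᵀ))) := by
    rw [hSVD, hC, hBdef]
    simp only [Matrix.mul_assoc]
  have hCCinv : (C * Cᵀ)⁻¹ = V * (Sig⁻¹ * (Sig⁻¹ * Vᵀ)) := by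
    apply Matrix.inv_eq_right_inv
    rw [hCC]
    simp only [Matrix.mul_assoc, hV1, hSig1]
    exact hV'
  have hWW : ((C * Cᵀ)⁻¹ * (C * S₁ * Cᵀ) * (C * Cᵀ)⁻¹) * (C * S₁⁻¹ * Cᵀ) =
      V * (Sig⁻¹ * ((A * B) * (Sig * Vᵀ))) := by
    rw [hCCinv, hCSC, hCSC']
    simp only [Matrix.mul_assoc, hV1, hSig1, hSig2]
  rw [hWW] at hzeq
  have hkey : (Sig * Vᵀ) * (V * (Sig⁻¹ * ((A * B) * (Sig * Vᵀ)))) =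
      (A * B) * (Sig * Vᵀ) := by
    simp only [Matrix.mul_assoc, hV1, hSig1]
  set z' : Fin p → ℝ := (Sig * Vᵀ) *ᵥ z with hz'def
  have heig' : (A * B) *ᵥ z' = μ • z' := by
    calc (A * B) *ᵥ z' = ((A * B) * (Sig * Vᵀ)) *ᵥ z := by
          rw [hz'def, Matrix.mulVec_mulVec]
      _ = ((Sig * Vᵀ) * (V * (Sig⁻¹ * ((A * B) * (Sig * Vᵀ))))) *ᵥ z := by rw [hkey]
      _ = (Sig * Vᵀ) *ᵥ ((V * (Sig⁻¹ * ((A * B) * (Sig * Vᵀ)))) *ᵥ z) := by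
          rw [Matrix.mulVec_mulVec]
      _ = (Sig * Vᵀ) *ᵥ (μ • z) := by rw [hzeq]
      _ = μ • z' := by rw [Matrix.mulVec_smul, hz'def]
  have hz' : z' ≠ 0 := by
    intro h
    apply hz
    have h4 : (V * (Sig⁻¹ * (Sig * Vᵀ))) *ᵥ z = 0 := by
      rw [show V * (Sig⁻¹ * (Sig * Vᵀ)) = (V * Sig⁻¹) * (Sig * Vᵀ) by
        rw [Matrix.mul_assoc], ← Matrix.mulVec_mulVec, ← hz'def, h, Matrix.mulVec_zero]
    rwa [hSig2, hV', Matrix.one_mulVec] at h4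
  have hdet : (μ • (1 : Matrix (Fin p) (Fin p) ℝ) - A * B).det = 0 := by
    apply Matrix.exists_mulVec_eq_zero_iff.mp
    exact ⟨z', hz', by
      rw [Matrix.sub_mulVec, Matrix.smul_mulVec, Matrix.one_mulVec, heig',
        sub_self]⟩
  have hroot : (((A * B).map (Complex.ofReal : ℝ → ℂ)).charpoly).IsRoot (μ : ℂ) := by
    show (((A * B).map (Complex.ofReal : ℝ → ℂ)).charpoly).eval (μ : ℂ) = 0
    have hmc : (A * B).map (Complex.ofReal : ℝ → ℂ) =
        (A * B).map (Complex.ofRealHom : ℝ →+* ℂ) := rfl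
    rw [hmc, Matrix.charpoly_map, Polynomial.eval_map,
      show ((μ : ℂ)) = Complex.ofRealHom μ from rfl, Polynomial.eval₂_at_apply]
    rw [evalCharpoly, hdet]
    exact map_zero _
  have := part1 (μ : ℂ) hroot
  simpa using this.2
end
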